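/- Let A be a semiperfect ring and ξ ∈ A an idempotent. There is a bijection between the set of conjugacy classes of primitive idempotents in A and the disjoint union of the set of conjugacy classes of primitive idempotents in the corner ring ξAξ and the set of conjugacy classes of primitive idempotents in the quotient ring A/(AξA). The bijection sends the conjugacy class X of a primitive idempotent to X ∩ (ξAξ) if X ⊆ AξA, and to its image in A/(AξA) otherwise. -/
import Mathlib


section Defs

variable {A : Type*} [Ring A]

/-- An idempotent `e` is primitive if it is nonzero and is not the sum of two nonzero
orthogonal idempotents. -/
def IsPrimitiveIdem (e : A) : Prop :=
  IsIdempotentElem e ∧ e ≠ 0 ∧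
    ∀ a b : A, IsIdempotentElem a → IsIdempotentElem b → a * b = 0 → b * a = 0 →
      a ≠ 0 → b ≠ 0 → a + b ≠ e

/-- Conjugacy of idempotents: `f = u e u⁻¹` for some unit `u`. -/
def IsConjIdem (e f : A) : Prop := ∃ u : Aˣ, f = (u : A) * e * ((u⁻¹ : Aˣ) : A)

/-- An idempotent `e` is local if it is nonzero and the corner ring `eAe` is local. -/
def IsLocalIdem (e : A) : Prop :=
  IsIdempotentElem e ∧ e ≠ 0 ∧
    ∀ x : A,
      (∃ y : A, y = e * y * e ∧ (e * x * e) * y = e ∧ y * (e * x * e) = e) ∨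
      (∃ y : A, y = e * y * e ∧ (e - e * x * e) * y = e ∧ y * (e - e * x * e) = e)

/-- A ring is semiperfect if `1` is a sum of mutually orthogonal local idempotents. -/
def SemiperfectRing' (A : Type*) [Ring A] : Prop :=
  ∃ (n : ℕ) (e : Fin n → A), (∀ i, IsLocalIdem (e i)) ∧
    (∀ i j, i ≠ j → e i * e j = 0) ∧ (∑ i, e i) = 1

/-- Membership in the two-sided ideal `AξA` generated by `ξ`. -/
def MemIdealGen (ξ x : A) : Prop :=
  ∃ (n : ℕ) (a b : Fin n → A), x = ∑ i, a i * ξ * b i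

/-- `e` is a primitive idempotent of the corner ring `ξAξ`. -/
def CornerPrimIdem (ξ e : A) : Prop :=
  IsIdempotentElem e ∧ e = ξ * e * ξ ∧ e ≠ 0 ∧
    ∀ a b : A, IsIdempotentElem a → IsIdempotentElem b →
      a = ξ * a * ξ → b = ξ * b * ξ → a * b = 0 → b * a = 0 →
      a ≠ 0 → b ≠ 0 → a + b ≠ e

/-- Conjugacy in the corner ring `ξAξ` (whose identity element is `ξ`). -/
def CornerConjIdem (ξ e f : A) : Prop :=
  ∃ u v : A, u = ξ * u * ξ ∧ v = ξ * v * ξ ∧ u * v = ξ ∧ v * u = ξ ∧ f = u * e * v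

/-- `x` represents an idempotent of the quotient ring `A/(AξA)`. -/
def ModIdem (ξ x : A) : Prop := MemIdealGen ξ (x * x - x)

/-- `x` represents a primitive idempotent of the quotient ring `A/(AξA)`. -/
def ModPrimIdem (ξ x : A) : Prop :=
  ModIdem ξ x ∧ ¬ MemIdealGen ξ x ∧
    ∀ a b : A, ModIdem ξ a → ModIdem ξ b → MemIdealGen ξ (a * b) → MemIdealGen ξ (b * a) →
      ¬ MemIdealGen ξ a → ¬ MemIdealGen ξ b → ¬ MemIdealGen ξ (a + b - x)

/-- `x`, `y` represent conjugate idempotents of the quotient ring `A/(AξA)`. -/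
def ModConjIdem (ξ x y : A) : Prop :=
  ∃ u v : A, MemIdealGen ξ (u * v - 1) ∧ MemIdealGen ξ (v * u - 1) ∧
    MemIdealGen ξ (u * x * v - y)

end Defs

namespace SPCaux

variable {R : Type*} [Ring R]

/-- corner-unit: `z` has a two-sided inverse in the corner ring `eRe`. -/
def CU (e z : R) : Prop := ∃ y : R, y = e * y * e ∧ z * y = e ∧ y * z = e

theorem locIff {e : R} : IsLocalIdem e ↔ IsIdempotentElem e ∧ e ≠ 0 ∧
    ∀ x : R, CU e (e * x * e) ∨ CU e (e - e * x * e) := Iff.rfl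

theorem ul {e x : R} (he : IsIdempotentElem e) (h : e * x * e = x) : e * x = x := by
  conv_lhs => rw [← h]
  rw [← mul_assoc, ← mul_assoc, he]
  exact h

theorem ur {e x : R} (he : IsIdempotentElem e) (h : e * x * e = x) : x * e = x := by
  conv_lhs => rw [← h]
  rw [mul_assoc, he]
  exact h

theorem under_trans {E F x : R} (hE : IsIdempotentElem E) (hF : E * F * E = F)
    (hx : F * x * F = x) : E * x * E = x := by
  conv_lhs => rw [← hx]
  rw [← mul_assoc, ← mul_assoc, ul hE hF, mul_assoc, mul_assoc, ur hE hF, ← mul_assoc]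
  exact hx

theorem cu_dich {e z : R} (hl : IsLocalIdem e) (hz : e * z * e = z) :
    CU e z ∨ CU e (e - z) := by
  have := hl.2.2 z
  rw [hz] at this
  exact this

theorem cu_self {e : R} (hl : IsLocalIdem e) : CU e e :=
  ⟨e, by rw [hl.1, hl.1], hl.1, hl.1⟩

theorem cu_idem {e z : R} (he : IsIdempotentElem e) (hz : IsIdempotentElem z)
    (h1 : e * z = z) (h2 : z * e = z) (hcu : CU e z) : z = e := by
  obtain ⟨y, _, _, hyz⟩ := hcu
  have k : z * (e - z) = 0 := by rw [mul_sub, h2, hz, sub_self]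
  have k2 : e * (e - z) = 0 := by
    calc e * (e - z) = y * z * (e - z) := by rw [hyz]
      _ = y * (z * (e - z)) := by rw [mul_assoc]
      _ = 0 := by rw [k, mul_zero]
  have k3 : e * (e - z) = e - z := by rw [mul_sub, he, h1]
  have : e - z = 0 := by rw [← k3, k2]
  exact (sub_eq_zero.mp this).symm

theorem cu_of_rinv {e z y : R} (hl : IsLocalIdem e) (hz : e * z * e = z)
    (hy : e * y * e = y) (h : z * y = e) : CU e z := by
  have he := hl.1
  have hw : e * (y * z) * e = y * z := by
    rw [← mul_assoc, mul_assoc (e*y) z e, ul he hy, ur he hz]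
  have hwi : IsIdempotentElem (y * z) := by
    have : y * z * (y * z) = y * (z * y) * z := by
      rw [mul_assoc, mul_assoc, mul_assoc]
    rw [IsIdempotentElem, this, h, mul_assoc, ul he hz]
  rcases cu_dich hl hw with hcw | hcw
  · have hyz : y * z = e := cu_idem he hwi (ul he hw) (ur he hw) hcw
    exact ⟨y, hy.symm, h, hyz⟩
  · exfalso
    obtain ⟨c, _, _, hc2⟩ := hcw
    have hyy : (e - y * z) * y = 0 := by
      rw [sub_mul, ul he hy, mul_assoc, h, ur he hy, sub_self]
    have hy0 : y = 0 := by
      have : e * y = 0 := by rw [← hc2, mul_assoc, hyy, mul_zero]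
      rw [← ul he hy, this]
    apply hl.2.1
    rw [← h, hy0, mul_zero]

theorem cu_nonunit_add {e z w : R} (hl : IsLocalIdem e) (hz : e * z * e = z)
    (hw : e * w * e = w) (h1 : ¬ CU e z) (h2 : ¬ CU e w) : ¬ CU e (z + w) := by
  rintro ⟨c, hc, hc1, _⟩
  have he := hl.1
  have hcs : e * c * e = c := hc.symm
  have ha : e * (z * c) * e = z * c := by
    rw [← mul_assoc, mul_assoc (e*z) c e, ul he hz, ur he hcs]
  rcases cu_dich hl ha with h | h
  · obtain ⟨c', hc', hcc1, _⟩ := h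
    apply h1
    refine cu_of_rinv (y := c * c') hl hz ?_ ?_
    · have hcs' : e * c' * e = c' := hc'.symm
      rw [← mul_assoc, mul_assoc (e*c) c' e, ul he hcs, ur he hcs']
    · rw [← mul_assoc]; exact hcc1
  · have key : e - z * c = w * c := by rw [← hc1, add_mul]; abel
    rw [key] at h
    obtain ⟨c', hc', hcc1, _⟩ := h
    apply h2
    refine cu_of_rinv (y := c * c') hl hw ?_ ?_
    · have hcs' : e * c' * e = c' := hc'.symm
      rw [← mul_assoc, mul_assoc (e*c) c' e, ul he hcs, ur he hcs']
    · rw [← mul_assoc]; exact hcc1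

theorem cu_sum {e : R} (hl : IsLocalIdem e) {ι : Type*} (s : Finset ι) (x : ι → R)
    (hx : ∀ i ∈ s, e * x i * e = x i) (hs : ∑ i ∈ s, x i = e) : ∃ i ∈ s, CU e (x i) := by
  by_contra hno
  push_neg at hno
  have key : ∀ t : Finset ι, (∀ i ∈ t, e * x i * e = x i ∧ ¬ CU e (x i)) →
      ¬ CU e (∑ i ∈ t, x i) := by
    intro t
    induction t using Finset.cons_induction with
    | empty =>
      intro _
      rw [Finset.sum_empty]
      rintro ⟨y, _, hy1, _⟩
      exact hl.2.1 (by rw [← hy1, zero_mul])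
    | cons a t ha ih =>
      intro ht
      rw [Finset.sum_cons]
      have hsum_shape : e * (∑ i ∈ t, x i) * e = ∑ i ∈ t, x i := by
        rw [Finset.mul_sum, Finset.sum_mul]
        exact Finset.sum_congr rfl fun i hi => (ht i (Finset.mem_cons_of_mem hi)).1
      exact cu_nonunit_add hl (ht a (Finset.mem_cons_self a t)).1 hsum_shape
        (ht a (Finset.mem_cons_self a t)).2
        (ih fun i hi => ht i (Finset.mem_cons_of_mem hi))
  exact key s (fun i hi => ⟨hx i hi, hno i hi⟩) (by rw [hs]; exact cu_self hl)


/-! ### Isomorphism of idempotents -/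

/-- `x` and `y` are isomorphic idempotents. -/
def Iso (x y : R) : Prop := IsIdempotentElem x ∧ IsIdempotentElem y ∧
  ∃ p q : R, p = x * p * y ∧ q = y * q * x ∧ p * q = x ∧ q * p = y

theorem absorb_l {x p y : R} (hx : IsIdempotentElem x) (hp : p = x * p * y) : x * p = p := by
  conv_lhs => rw [hp]
  rw [← mul_assoc, ← mul_assoc, hx, ← hp]

theorem absorb_r {x p y : R} (hy : IsIdempotentElem y) (hp : p = x * p * y) : p * y = p := by
  conv_lhs => rw [hp]
  rw [mul_assoc, hy, ← hp]

theorem Iso.refl {x : R} (hx : IsIdempotentElem x) : Iso x x :=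
  ⟨hx, hx, x, x, by rw [hx, hx], by rw [hx, hx], hx, hx⟩

theorem Iso.symm {x y : R} (h : Iso x y) : Iso y x := by
  obtain ⟨hx, hy, p, q, hp, hq, hpq, hqp⟩ := h
  exact ⟨hy, hx, q, p, hq, hp, hqp, hpq⟩

theorem Iso.trans {x y z : R} (h1 : Iso x y) (h2 : Iso y z) : Iso x z := by
  obtain ⟨hx, hy, p, q, hp, hq, hpq, hqp⟩ := h1
  obtain ⟨_, hz, p', q', hp', hq', hpq', hqp'⟩ := h2
  have hxp : x * p = p := absorb_l hx hp
  have hpy : p * y = p := absorb_r hy hp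
  have hp'z : p' * z = p' := absorb_r hz hp'
  have hzq' : z * q' = q' := absorb_l hz hq'
  have hq'y : q' * y = q' := absorb_r hy hq'
  have hqx : q * x = q := absorb_r hx hq
  refine ⟨hx, hz, p * p', q' * q, ?_, ?_, ?_, ?_⟩
  · calc p * p' = (x * p) * (p' * z) := by rw [hxp, hp'z]
      _ = x * (p * p') * z := by noncomm_ring
  · calc q' * q = (z * q') * (q * x) := by rw [hzq', hqx]
      _ = z * (q' * q) * x := by noncomm_ring
  · calc p * p' * (q' * q) = p * (p' * q') * q := by noncomm_ring
      _ = p * y * q := by rw [hpq']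
      _ = p * q := by rw [hpy]
      _ = x := hpq
  · calc q' * q * (p * p') = q' * (q * p) * p' := by noncomm_ring
      _ = q' * y * p' := by rw [hqp]
      _ = q' * p' := by rw [hq'y]
      _ = z := hqp'

theorem Iso.zero {x y : R} (h : Iso x y) (hx : x = 0) : y = 0 := by
  obtain ⟨_, _, p, q, hp, hq, hpq, hqp⟩ := h
  rw [← hqp, hq, hx]
  simp

theorem iso_ne_zero {x y : R} (h : Iso x y) (hx : x ≠ 0) : y ≠ 0 :=
  fun h0 => hx (h.symm.zero h0)

theorem cu_pull {x y p q b : R} (hx : IsIdempotentElem x) (hy : IsIdempotentElem y)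
    (hp : p = x * p * y) (hq : q = y * q * x) (hpq : p * q = x) (hqp : q * p = y)
    (hb : y * b * y = b) (hcu : CU x (p * b * q)) : CU y b := by
  obtain ⟨c, hc, h1, h2⟩ := hcu
  have hyq : y * q = q := absorb_l hy hq
  have hqx : q * x = q := absorb_r hx hq
  have hxp : x * p = p := absorb_l hx hp
  have hpy : p * y = p := absorb_r hy hp
  have hby : b * y = b := ur hy hb
  have hyb : y * b = b := ul hy hb
  refine ⟨q * c * p, ?_, ?_, ?_⟩
  · -- q*c*p = y*(q*c*p)*y
    rw [← mul_assoc, ← mul_assoc, hyq, mul_assoc (q*c) p y, hpy]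
  · -- b*(q*c*p) = y
    calc b * (q * c * p) = (q * p) * b * (q * c * p) := by rw [hqp, hyb]
      _ = q * ((p * b * q) * c) * p := by noncomm_ring
      _ = q * x * p := by rw [h1]
      _ = y := by rw [hqx, hqp]
  · -- (q*c*p)*b = y
    calc (q * c * p) * b = (q * c * p) * b * (q * p) := by rw [hqp, mul_assoc (q * c * p) b y, hby]
      _ = q * (c * (p * b * q)) * p := by noncomm_ring
      _ = q * x * p := by rw [h2]
      _ = y := by rw [hqx, hqp]

theorem iso_local {x y : R} (h : Iso x y) (hl : IsLocalIdem x) : IsLocalIdem y := by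
  obtain ⟨hx, hy, p, q, hp, hq, hpq, hqp⟩ := h
  have hyq : y * q = q := absorb_l hy hq
  have hqx : q * x = q := absorb_r hx hq
  have hxp : x * p = p := absorb_l hx hp
  have hpy : p * y = p := absorb_r hy hp
  refine ⟨hy, ?_, ?_⟩
  · intro h0
    apply hl.2.1
    rw [← hpq, hp, h0]
    simp
  · intro z
    have hb : y * (y * z * y) * y = y * z * y := by
      rw [← mul_assoc, ← mul_assoc, hy, mul_assoc, hy]
    set b := y * z * y with hbdef
    have hw : x * (p * b * q) * x = p * b * q := by
      rw [← mul_assoc, ← mul_assoc, hxp, mul_assoc (p*b) q x, hqx]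
    have := hl.2.2 (p * b * q)
    rw [hw] at this
    rcases this with hcu | hcu
    · left
      exact cu_pull hx hy hp hq hpq hqp hb hcu
    · right
      have key : x - p * b * q = p * (y - b) * q := by
        rw [mul_sub, sub_mul, hpy, hpq]
      rw [key] at hcu
      have hb' : y * (y - b) * y = y - b := by
        rw [mul_sub, sub_mul, hy, hy, hb]
      exact cu_pull hx hy hp hq hpq hqp hb' hcu


/-! ### relative conjugacy toolkit -/

theorem under_of_parts {E a : R} (h1 : E * a = a) (h2 : a * E = a) : a = E * a * E := by
  rw [h1, h2]

theorem rconj_refl {E x : R} (hE : IsIdempotentElem E) (hx : E * x * E = x) :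
    CornerConjIdem E x x :=
  ⟨E, E, by rw [hE, hE], by rw [hE, hE], hE, hE, hx.symm⟩

theorem rconj_symm {E x y : R} (hx : E * x * E = x) (h : CornerConjIdem E x y) :
    CornerConjIdem E y x := by
  obtain ⟨u, v, huS, hvS, huv, hvu, hy⟩ := h
  refine ⟨v, u, hvS, huS, hvu, huv, ?_⟩
  calc x = E * x * E := hx.symm
    _ = (v * u) * x * (v * u) := by rw [hvu]
    _ = v * (u * x * v) * u := by noncomm_ring
    _ = v * y * u := by rw [← hy]

theorem rconj_trans {E x y z : R} (hE : IsIdempotentElem E)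
    (h1 : CornerConjIdem E x y) (h2 : CornerConjIdem E y z) : CornerConjIdem E x z := by
  obtain ⟨u, v, huS, hvS, huv, hvu, hy⟩ := h1
  obtain ⟨u', v', huS', hvS', huv', hvu', hz⟩ := h2
  have hEu' : E * u' = u' := ul hE huS'.symm
  have huE : u * E = u := ur hE huS.symm
  have hEv : E * v = v := ul hE hvS.symm
  have hv'E : v' * E = v' := ur hE hvS'.symm
  have hu'E : u' * E = u' := ur hE huS'.symm
  have hEv' : E * v' = v' := ul hE hvS'.symm
  refine ⟨u' * u, v * v', ?_, ?_, ?_, ?_, ?_⟩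
  · refine under_of_parts ?_ ?_
    · rw [← mul_assoc, hEu']
    · rw [mul_assoc, huE]
  · refine under_of_parts ?_ ?_
    · rw [← mul_assoc, hEv]
    · rw [mul_assoc, hv'E]
  · calc (u' * u) * (v * v') = u' * (u * v) * v' := by noncomm_ring
      _ = u' * E * v' := by rw [huv]
      _ = u' * v' := by rw [hu'E]
      _ = E := huv'
  · calc (v * v') * (u' * u) = v * (v' * u') * u := by noncomm_ring
      _ = v * E * u := by rw [hvu']
      _ = v * u := by rw [ur hE hvS.symm]
      _ = E := hvu
  · calc z = u' * y * v' := hz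
      _ = u' * (u * x * v) * v' := by rw [hy]
      _ = (u' * u) * x * (v * v') := by noncomm_ring

theorem rconj_iso {E x y : R} (hE : IsIdempotentElem E) (hxi : IsIdempotentElem x)
    (hx : E * x * E = x) (h : CornerConjIdem E x y) : Iso x y := by
  obtain ⟨u, v, huS, hvS, huv, hvu, hy⟩ := h
  have hxE : x * E = x := ur hE hx
  have hyi : IsIdempotentElem y := by
    show y * y = y
    calc y * y = (u * x * v) * (u * x * v) := by rw [hy]
      _ = u * (x * E * x) * v := by rw [← hvu]; noncomm_ring
      _ = u * x * v := by rw [hxE, hxi]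
      _ = y := hy.symm
  refine ⟨hxi, hyi, x * v, u * x, ?_, ?_, ?_, ?_⟩
  · have : x * (x * v) * y = x * v := by
      calc x * (x * v) * y = x * (x * v) * (u * x * v) := by rw [hy]
        _ = (x * x) * (v * u) * (x * v) := by noncomm_ring
        _ = x * E * (x * v) := by rw [hxi, hvu]
        _ = (x * E * x) * v := by noncomm_ring
        _ = x * v := by rw [hxE, hxi]
    exact this.symm
  · have : y * (u * x) * x = u * x := by
      calc y * (u * x) * x = (u * x * v) * (u * x) * x := by rw [hy]
        _ = u * (x * (v * u) * x) * x := by noncomm_ring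
        _ = u * (x * E * x) * x := by rw [hvu]
        _ = (u * x) * x := by rw [hxE, hxi]
        _ = u * (x * x) := by rw [mul_assoc]
        _ = u * x := by rw [hxi]
    exact this.symm
  · calc (x * v) * (u * x) = x * (v * u) * x := by noncomm_ring
      _ = x * E * x := by rw [hvu]
      _ = x := by rw [hxE, hxi]
  · calc (u * x) * (x * v) = u * (x * x) * v := by noncomm_ring
      _ = u * x * v := by rw [hxi]
      _ = y := hy.symm

theorem rconj_under {E x y : R} (hE : IsIdempotentElem E) (h : CornerConjIdem E x y) :
    E * y * E = y := by
  obtain ⟨u, v, huS, hvS, _, _, hy⟩ := h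
  have hEu : E * u = u := ul hE huS.symm
  have hvE : v * E = v := ur hE hvS.symm
  calc E * y * E = E * (u * x * v) * E := by rw [hy]
    _ = (E * u) * x * (v * E) := by noncomm_ring
    _ = u * x * v := by rw [hEu, hvE]
    _ = y := hy.symm

theorem rconj_ne {E x y : R} (hx : E * x * E = x) (h : CornerConjIdem E x y)
    (hx0 : x ≠ 0) : y ≠ 0 := by
  intro h0
  obtain ⟨a, b, _, _, _, _, hx'⟩ := rconj_symm hx h
  exact hx0 (by rw [hx', h0, mul_zero, zero_mul])

theorem rconj_local {E x y : R} (hE : IsIdempotentElem E) (hl : IsLocalIdem x)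
    (hx : E * x * E = x) (h : CornerConjIdem E x y) : IsLocalIdem y :=
  iso_local (rconj_iso hE hl.1 hx h) hl

theorem isConj_iff_cc {x y : R} : IsConjIdem x y ↔ CornerConjIdem 1 x y := by
  constructor
  · rintro ⟨u, hu⟩
    exact ⟨(u : R), ((u⁻¹ : Rˣ) : R), by simp, by simp, by simp, by simp, hu⟩
  · rintro ⟨u, v, _, _, huv, hvu, hy⟩
    exact ⟨⟨u, v, huv, hvu⟩, hy⟩

/-! ### orthogonal isomorphic idempotents are conjugate -/

theorem orth_iso_rconj {E p q : R} (hE : IsIdempotentElem E)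
    (hpE : E * p * E = p) (hqE : E * q * E = q) (hpq0 : p * q = 0) (hqp0 : q * p = 0)
    (hiso : Iso p q) : CornerConjIdem E p q := by
  obtain ⟨hp, hq, X, Y, hX, hY, hXY, hYX⟩ := hiso
  have pX : p * X = X := absorb_l hp hX
  have Xq : X * q = X := absorb_r hq hX
  have qY : q * Y = Y := absorb_l hq hY
  have Yp : Y * p = Y := absorb_r hp hY
  have qX : q * X = 0 := by
    calc q * X = q * (p * X * q) := by rw [← hX]
      _ = (q * p) * (X * q) := by noncomm_ring
      _ = 0 := by rw [hqp0, zero_mul]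
  have Xp : X * p = 0 := by
    calc X * p = (p * X * q) * p := by rw [← hX]
      _ = p * X * (q * p) := by noncomm_ring
      _ = 0 := by rw [hqp0, mul_zero]
  have pY : p * Y = 0 := by
    calc p * Y = p * (q * Y * p) := by rw [← hY]
      _ = (p * q) * (Y * p) := by noncomm_ring
      _ = 0 := by rw [hpq0, zero_mul]
  have Yq : Y * q = 0 := by
    calc Y * q = (q * Y * p) * q := by rw [← hY]
      _ = q * Y * (p * q) := by noncomm_ring
      _ = 0 := by rw [hpq0, mul_zero]
  have XX : X * X = 0 := by
    calc X * X = X * (p * X * q) := by rw [← hX]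
      _ = (X * p) * (X * q) := by noncomm_ring
      _ = 0 := by rw [Xp, zero_mul]
  have YY : Y * Y = 0 := by
    calc Y * Y = Y * (q * Y * p) := by rw [← hY]
      _ = (Y * q) * (Y * p) := by noncomm_ring
      _ = 0 := by rw [Yq, zero_mul]
  have Ep : E * p = p := ul hE hpE
  have pE : p * E = p := ur hE hpE
  have Eq : E * q = q := ul hE hqE
  have qE : q * E = q := ur hE hqE
  have EX : E * X = X := by rw [← pX, ← mul_assoc, Ep]
  have XE : X * E = X := by rw [← Xq, mul_assoc, qE]
  have EY : E * Y = Y := by rw [← qY, ← mul_assoc, Eq]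
  have YE : Y * E = Y := by rw [← Yp, mul_assoc, pE]
  have huu : (E - p - q + X + Y) * (E - p - q + X + Y) = E := by
    simp only [sub_mul, add_mul, mul_sub, mul_add]
    rw [hE, Ep, Eq, EX, EY, pE, hp, hpq0, pX, pY, qE, hqp0, hq, qX, qY,
      XE, Xp, Xq, XX, hXY, YE, Yp, Yq, hYX, YY]
    abel
  have hupu : (E - p - q + X + Y) * p * (E - p - q + X + Y) = q := by
    have h1 : (E - p - q + X + Y) * p = Y := by
      simp only [sub_mul, add_mul]
      rw [Ep, hp, hqp0, Xp, Yp]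
      abel
    rw [h1]
    simp only [mul_sub, mul_add]
    rw [YE, Yp, Yq, hYX, YY]
    abel
  refine ⟨E - p - q + X + Y, E - p - q + X + Y, ?_, ?_, huu, huu, hupu.symm⟩
  · refine under_of_parts ?_ ?_
    · simp only [mul_sub, mul_add]; rw [hE, Ep, Eq, EX, EY]
    · simp only [sub_mul, add_mul]; rw [hE, pE, qE, XE, YE]
  · refine under_of_parts ?_ ?_
    · simp only [mul_sub, mul_add]; rw [hE, Ep, Eq, EX, EY]
    · simp only [sub_mul, add_mul]; rw [hE, pE, qE, XE, YE]


/-! ### the key conjugation lemma -/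

theorem kl {E e g : R} (hE : IsIdempotentElem E) (hei : IsIdempotentElem e)
    (heE : E * e * E = e) (he0 : e ≠ 0) (hg : IsLocalIdem g) (hgE : E * g * E = g)
    (hcu : CU e (e * g * e)) : CornerConjIdem E e g := by
  obtain ⟨c, hcs, h1, h2⟩ := hcu
  have hgi := hg.1
  have hec : e * c = c := ul hei hcs.symm
  have hce : c * e = c := ur hei hcs.symm
  have hEe : E * e = e := ul hE heE
  have heE' : e * E = e := ur hE heE
  have hEg : E * g = g := ul hE hgE
  have hgE' : g * E = g := ur hE hgE
  have egc : e * g * c = e := by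
    calc e * g * c = e * g * (e * c) := by rw [hec]
      _ = (e * g * e) * c := by noncomm_ring
      _ = e := h1
  have cge : c * g * e = e := by
    have key : c * (e * g * e) = c * g * e := by
      calc c * (e * g * e) = (c * e) * g * e := by noncomm_ring
        _ = c * g * e := by rw [hce]
    rw [← key]; exact h2
  have hEc : E * c = c := by rw [← hec, ← mul_assoc, hEe]
  have hcE : c * E = c := by rw [← hce, mul_assoc, heE']
  have heh : e * (c * g) = c * g := by rw [← mul_assoc, hec]
  have hhe : (c * g) * e = e := by rw [mul_assoc, ← mul_assoc c g e, cge]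
  have k2 : c * g * c = c := by
    calc c * g * c = c * (g * (e * c)) := by rw [hec, mul_assoc]
      _ = (c * g * e) * c := by noncomm_ring
      _ = e * c := by rw [cge]
      _ = c := hec
  have hch_idem : IsIdempotentElem (c * g) := by
    show (c * g) * (c * g) = c * g
    calc (c * g) * (c * g) = (c * g * c) * g := by noncomm_ring
      _ = c * g := by rw [k2]
  have hEh : E * (c * g) = c * g := by rw [← mul_assoc, hEc]
  have hhE : (c * g) * E = c * g := by rw [mul_assoc, hgE']
  have pair1_uv : (E - e + c * g) * (E - (c * g) + e) = E := by
    simp only [sub_mul, add_mul, mul_sub, mul_add]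
    rw [hE, hEh, hEe, heE', heh, hei, hhE, hch_idem, hhe]
    abel
  have pair1_vu : (E - c * g + e) * (E - e + c * g) = E := by
    simp only [sub_mul, add_mul, mul_sub, mul_add]
    rw [hE, hEe, hEh, hhE, hhe, hch_idem, heE', hei, heh]
    abel
  have conj1 : CornerConjIdem E e (c * g) := by
    refine ⟨E - c * g + e, E - e + c * g, ?_, ?_, pair1_vu, pair1_uv, ?_⟩
    · refine under_of_parts ?_ ?_
      · simp only [mul_sub, mul_add]; rw [hE, hEh, hEe]
      · simp only [sub_mul, add_mul]; rw [hE, hhE, heE']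
    · refine under_of_parts ?_ ?_
      · simp only [mul_sub, mul_add]; rw [hE, hEe, hEh]
      · simp only [sub_mul, add_mul]; rw [hE, heE', hhE]
    · have step1 : (E - c * g + e) * e = e := by
        simp only [sub_mul, add_mul]
        rw [hEe, hhe, hei]
        abel
      have step2 : e * (E - e + c * g) = c * g := by
        simp only [mul_sub, mul_add]
        rw [heE', hei, heh]
        abel
      rw [step1, step2]
  have hhg : (c * g) * g = c * g := by rw [mul_assoc, hgi]
  have xy : (e * g) * (g * c) = e := by
    calc (e * g) * (g * c) = e * (g * g) * c := by noncomm_ring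
      _ = e * g * c := by rw [hgi]
      _ = e := egc
  have yx : (g * c) * (e * g) = g * (c * g) := by
    calc (g * c) * (e * g) = g * (c * e) * g := by noncomm_ring
      _ = (g * c) * g := by rw [hce]
      _ = g * (c * g) := by rw [mul_assoc]
  have hgh_idem : IsIdempotentElem (g * (c * g)) := by
    show _ * _ = _
    calc g * (c * g) * (g * (c * g)) = g * ((c * g) * g) * (c * g) := by noncomm_ring
      _ = g * (c * g) * (c * g) := by rw [hhg]
      _ = g * ((c * g) * (c * g)) := by rw [mul_assoc]
      _ = g * (c * g) := by rw [hch_idem]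
  have hgh_under : g * (g * (c * g)) * g = g * (c * g) := by
    calc g * (g * (c * g)) * g = (g * g) * ((c * g) * g) := by noncomm_ring
      _ = g * (c * g) := by rw [hgi, hhg]
  have hgh_ne : g * (c * g) ≠ 0 := by
    intro h0
    apply he0
    calc e = e * e := hei.symm
      _ = ((e * g) * (g * c)) * ((e * g) * (g * c)) := by rw [xy]
      _ = (e * g) * ((g * c) * (e * g)) * (g * c) := by noncomm_ring
      _ = (e * g) * (g * (c * g)) * (g * c) := by rw [yx]
      _ = 0 := by rw [h0, mul_zero, zero_mul]
  have hgw : g * (g * (c * g)) = g * (c * g) := by rw [← mul_assoc, hgi]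
  have hwg : (g * (c * g)) * g = g * (c * g) := by
    rw [mul_assoc, hhg]
  have hgh : g * (c * g) = g := by
    rcases cu_dich hg hgh_under with hcu' | hcu'
    · exact cu_idem hgi hgh_idem hgw hwg hcu'
    · exfalso
      have hidem2 : IsIdempotentElem (g - g * (c * g)) := by
        show (g - g * (c * g)) * (g - g * (c * g)) = _
        rw [sub_mul, mul_sub, mul_sub, hgi, hgw, hwg, hgh_idem]
        abel
      have heq := cu_idem hgi hidem2 (by rw [mul_sub, hgi, hgw])
        (by rw [sub_mul, hgi, hwg]) hcu'
      exact hgh_ne (sub_eq_self.mp heq)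
  have pair2_uv : (E - c * g + g) * (E - g + c * g) = E := by
    simp only [sub_mul, add_mul, mul_sub, mul_add]
    rw [hE, hEg, hEh, hhE, hhg, hch_idem, hgE', hgi, hgh]
    abel
  have pair2_vu : (E - g + c * g) * (E - c * g + g) = E := by
    simp only [sub_mul, add_mul, mul_sub, mul_add]
    rw [hE, hEh, hEg, hgE', hgh, hgi, hhE, hch_idem, hhg]
    abel
  have conj2 : CornerConjIdem E (c * g) g := by
    refine ⟨E - c * g + g, E - g + c * g, ?_, ?_, pair2_uv, pair2_vu, ?_⟩
    · refine under_of_parts ?_ ?_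
      · simp only [mul_sub, mul_add]; rw [hE, hEh, hEg]
      · simp only [sub_mul, add_mul]; rw [hE, hhE, hgE']
    · refine under_of_parts ?_ ?_
      · simp only [mul_sub, mul_add]; rw [hE, hEg, hEh]
      · simp only [sub_mul, add_mul]; rw [hE, hgE', hhE]
    · have s1 : (E - c * g + g) * (c * g) = g := by
        simp only [sub_mul, add_mul]
        rw [hEh, hch_idem, hgh]
        abel
      have s2 : g * (E - g + c * g) = g := by
        simp only [mul_sub, mul_add]
        rw [hgE', hgi, hgh]
        abel
      rw [s1, s2]
  exact rconj_trans hE conj1 conj2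

/-- Existence of a local sub-idempotent from a corner-unit condition. -/
theorem sub_of_cu {e g : R} (hei : IsIdempotentElem e) (hg : IsLocalIdem g)
    (hcu : CU g (g * e * g)) : ∃ d, IsLocalIdem d ∧ e * d * e = d ∧ Iso g d := by
  obtain ⟨c, hcs, h1, h2⟩ := hcu
  have hgi := hg.1
  have hgc : g * c = c := ul hgi hcs.symm
  have hcg : c * g = c := ur hgi hcs.symm
  have gec : g * e * c = g := by
    calc g * e * c = g * e * (g * c) := by rw [hgc]
      _ = (g * e * g) * c := by noncomm_ring
      _ = g := h1
  have ceg : c * e * g = g := by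
    have key : c * (g * e * g) = c * e * g := by
      calc c * (g * e * g) = (c * g) * e * g := by noncomm_ring
        _ = c * e * g := by rw [hcg]
    rw [← key]; exact h2
  have cec : c * e * c = c := by
    calc c * e * c = c * e * (g * c) := by rw [hgc]
      _ = (c * e * g) * c := by noncomm_ring
      _ = g * c := by rw [ceg]
      _ = c := hgc
  have hd_idem : IsIdempotentElem (e * c * e) := by
    show _ * _ = _
    calc (e * c * e) * (e * c * e) = e * c * (e * e) * (c * e) := by noncomm_ring
      _ = (e * c * e) * (c * e) := by rw [hei]
      _ = e * (c * e * c) * e := by noncomm_ring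
      _ = e * c * e := by rw [cec]
  have hiso : Iso g (e * c * e) := by
    refine ⟨hgi, hd_idem, g * e, e * c, ?_, ?_, ?_, ?_⟩
    · have key : g * (g * e) * (e * c * e) = g * e := by
        calc g * (g * e) * (e * c * e) = (g * g) * ((e * e) * (c * e)) := by noncomm_ring
          _ = g * (e * (c * e)) := by rw [hgi, hei]
          _ = (g * e * c) * e := by noncomm_ring
          _ = g * e := by rw [gec]
      exact key.symm
    · have key : (e * c * e) * (e * c) * g = e * c := by
        calc (e * c * e) * (e * c) * g = e * (c * (e * e) * c) * g := by noncomm_ring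
          _ = e * (c * e * c) * g := by rw [hei]
          _ = e * c * g := by rw [cec]
          _ = e * c := by rw [mul_assoc, hcg]
      exact key.symm
    · calc (g * e) * (e * c) = g * (e * e) * c := by noncomm_ring
        _ = g * e * c := by rw [hei]
        _ = g := gec
    · calc (e * c) * (g * e) = e * (c * g) * e := by noncomm_ring
        _ = e * c * e := by rw [hcg]
  have hu1 : e * (e * c * e) = e * c * e := by rw [← mul_assoc, ← mul_assoc, hei]
  have hu2 : (e * c * e) * e = e * c * e := by rw [mul_assoc, hei]
  exact ⟨e * c * e, iso_local hiso hg, by rw [hu1, hu2], hiso⟩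


/-! ### complete families of local idempotents -/

/-- A complete orthogonal family of local idempotents under `E`. -/
def CLU {ι : Type*} (E : R) (s : Finset ι) (g : ι → R) : Prop :=
  (∀ i ∈ s, IsLocalIdem (g i)) ∧ (∀ i ∈ s, ∀ j ∈ s, i ≠ j → g i * g j = 0) ∧
    (∑ i ∈ s, g i) = E

theorem CLU.under {ι : Type*} {E : R} {s : Finset ι} {g : ι → R} (h : CLU E s g)
    {i : ι} (hi : i ∈ s) : E * g i * E = g i := by
  have h1 : g i * E = g i := by
    rw [← h.2.2, Finset.mul_sum]
    rw [Finset.sum_eq_single i (fun j hj hne => h.2.1 i hi j hj (Ne.symm hne))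
      (fun hni => absurd hi hni)]
    exact (h.1 i hi).1
  have h2 : E * g i = g i := by
    rw [← h.2.2, Finset.sum_mul]
    rw [Finset.sum_eq_single i (fun j hj hne => h.2.1 j hj i hi hne)
      (fun hni => absurd hi hni)]
    exact (h.1 i hi).1
  rw [h2, h1]

theorem CLU.empty_eq_zero {ι : Type*} {E : R} {g : ι → R} (h : CLU E (∅ : Finset ι) g) :
    E = 0 := by
  have key := h.2.2
  rw [Finset.sum_empty] at key
  exact key.symm

/-- Exchange: any local idempotent under `E` is conjugate to a member of a
complete family. -/
theorem m1 {ι : Type*} {E : R} {s : Finset ι} {g : ι → R} (hE : IsIdempotentElem E)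
    (h : CLU E s g) {f : R} (hf : IsLocalIdem f) (hfE : E * f * E = f) :
    ∃ i ∈ s, CornerConjIdem E f (g i) := by
  have hfE' : f * E = f := ur hE hfE
  have hsum : ∑ i ∈ s, f * g i * f = f := by
    have key : ∑ i ∈ s, f * g i * f = f * (∑ i ∈ s, g i) * f := by
      rw [Finset.mul_sum, Finset.sum_mul]
    rw [key, h.2.2, hfE', hf.1]
  have hshape : ∀ i ∈ s, f * (f * g i * f) * f = f * g i * f := by
    intro i _
    have l1 : f * (f * g i * f) = f * g i * f := by
      rw [← mul_assoc, ← mul_assoc, hf.1]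
    have l2 : (f * g i * f) * f = f * g i * f := by rw [mul_assoc, hf.1]
    rw [l1, l2]
  obtain ⟨i, hi, hcu⟩ := cu_sum hf s _ hshape hsum
  exact ⟨i, hi, kl hE hf.1 hfE hf.2.1 (h.1 i hi) (h.under hi) hcu⟩

/-- Every nonzero idempotent under `E` dominates a local idempotent. -/
theorem sub_loc {ι : Type*} [DecidableEq ι] : ∀ (N : ℕ) (s : Finset ι), s.card ≤ N →
    ∀ (E : R) (g : ι → R),
    IsIdempotentElem E → CLU E s g → ∀ e : R, IsIdempotentElem e → E * e * E = e → e ≠ 0 →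
    ∃ d, IsLocalIdem d ∧ e * d * e = d := by
  intro N
  induction N with
  | zero =>
    intro s hcard E g _ hclu e _ heE he0
    rw [Finset.card_eq_zero.mp (Nat.le_zero.mp hcard)] at hclu
    exact absurd (by rw [← heE, hclu.empty_eq_zero, zero_mul, zero_mul]) he0
  | succ N ih =>
    intro s hcard E g hE hclu e hei heE he0
    by_cases H : ∃ i ∈ s, CU (g i) (g i * e * g i)
    · obtain ⟨i, hi, hcu⟩ := H
      obtain ⟨d, hd, hde, _⟩ := sub_of_cu hei (hclu.1 i hi) hcu
      exact ⟨d, hd, hde⟩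
    · push_neg at H
      rcases Finset.eq_empty_or_nonempty s with rfl | ⟨i₀, hi₀⟩
      · exact absurd (by rw [← heE, hclu.empty_eq_zero, zero_mul, zero_mul]) he0
      have hgl := hclu.1 i₀ hi₀
      have hcu0 : CU (g i₀) (g i₀ - g i₀ * e * g i₀) :=
        (hgl.2.2 e).resolve_left (H i₀ hi₀)
      have hgEg : g i₀ * E * g i₀ = g i₀ := by
        rw [ur hE (hclu.under hi₀), hgl.1]
      have hEe : E * e = e := ul hE heE
      have heE' : e * E = e := ur hE heE
      have hfi : IsIdempotentElem (E - e) := by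
        show _ * _ = _
        rw [sub_mul, mul_sub, mul_sub, hE, hEe, heE', hei]
        abel
      have hfE : E * (E - e) * E = E - e := by
        simp only [mul_sub, sub_mul]
        rw [hE, hE, heE]
      have hf0 : E - e ≠ 0 := by
        intro h0
        have heqE : e = E := (sub_eq_zero.mp h0).symm
        have hz : g i₀ - g i₀ * e * g i₀ = 0 := by rw [heqE, hgEg, sub_self]
        rw [hz] at hcu0
        obtain ⟨y, _, hy1, _⟩ := hcu0
        exact hgl.2.1 (by rw [← hy1, zero_mul])
      have hcu0' : CU (g i₀) (g i₀ * (E - e) * g i₀) := by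
        have key : g i₀ * (E - e) * g i₀ = g i₀ - g i₀ * e * g i₀ := by
          simp only [mul_sub, sub_mul]
          rw [hgEg]
        rw [key]
        exact hcu0
      obtain ⟨d₀, hd₀, hd₀f, _⟩ := sub_of_cu hfi hgl hcu0'
      have hd₀E : E * d₀ * E = d₀ := under_trans hE hfE hd₀f
      obtain ⟨j, hj, hconj⟩ := m1 hE hclu hd₀ hd₀E
      obtain ⟨u, v, huS, hvS, huv, hvu, hgj⟩ := hconj
      have huE : u * E = u := ur hE huS.symm
      have hEu : E * u = u := ul hE huS.symm
      have hvE : v * E = v := ur hE hvS.symm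
      have hEv : E * v = v := ul hE hvS.symm
      have he'i : IsIdempotentElem (u * e * v) := by
        show _ * _ = _
        calc (u * e * v) * (u * e * v) = u * e * (v * u) * e * v := by noncomm_ring
          _ = u * (e * E * e) * v := by rw [hvu]; noncomm_ring
          _ = u * ((e * E) * e) * v := by noncomm_ring
          _ = u * e * v := by rw [heE', hei]
      have hrec : v * (u * e * v) * u = e := by
        calc v * (u * e * v) * u = (v * u) * e * (v * u) := by noncomm_ring
          _ = E * e * E := by rw [hvu]
          _ = e := heE
      have he'0 : u * e * v ≠ 0 := by
        intro h0
        exact he0 (by rw [← hrec, h0, mul_zero, zero_mul])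
      have hd₀e : d₀ * e = 0 := by
        have hfe : (E - e) * e = 0 := by rw [sub_mul, hEe, hei, sub_self]
        calc d₀ * e = (E - e) * d₀ * (E - e) * e := by rw [hd₀f]
          _ = (E - e) * d₀ * ((E - e) * e) := by noncomm_ring
          _ = 0 := by rw [hfe, mul_zero]
      have hed₀ : e * d₀ = 0 := by
        have hef : e * (E - e) = 0 := by rw [mul_sub, heE', hei, sub_self]
        calc e * d₀ = e * ((E - e) * d₀ * (E - e)) := by rw [hd₀f]
          _ = (e * (E - e)) * (d₀ * (E - e)) := by noncomm_ring
          _ = 0 := by rw [hef, zero_mul]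
      have hd₀E' : d₀ * E = d₀ := ur hE hd₀E
      have heE2 : e * E = e := heE'
      have h1 : g j * (u * e * v) = 0 := by
        calc g j * (u * e * v) = (u * d₀ * v) * (u * e * v) := by rw [hgj]
          _ = u * d₀ * (v * u) * e * v := by noncomm_ring
          _ = u * ((d₀ * E) * e) * v := by rw [hvu]; noncomm_ring
          _ = 0 := by rw [hd₀E', hd₀e, mul_zero, zero_mul]
      have h2 : (u * e * v) * g j = 0 := by
        calc (u * e * v) * g j = (u * e * v) * (u * d₀ * v) := by rw [hgj]
          _ = u * e * (v * u) * d₀ * v := by noncomm_ring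
          _ = u * ((e * E) * d₀) * v := by rw [hvu]; noncomm_ring
          _ = 0 := by rw [heE2, hed₀, mul_zero, zero_mul]
      have hgjE := hclu.under hj
      have hE''i : IsIdempotentElem (E - g j) := by
        show _ * _ = _
        rw [sub_mul, mul_sub, mul_sub, hE, ul hE hgjE, ur hE hgjE, (hclu.1 j hj).1]
        abel
      have hcluE'' : CLU (E - g j) (s.erase j) g := by
        refine ⟨fun i hi => hclu.1 i (Finset.mem_of_mem_erase hi),
          fun i hi k hk hik => hclu.2.1 i (Finset.mem_of_mem_erase hi)
            k (Finset.mem_of_mem_erase hk) hik, ?_⟩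
        have key : ∑ x ∈ s.erase j, g x + g j = E := by
          rw [Finset.sum_erase_add s g hj]
          exact hclu.2.2
        exact eq_sub_of_add_eq key
      have he'E : E * (u * e * v) * E = u * e * v := by
        calc E * (u * e * v) * E = (E * u) * e * (v * E) := by noncomm_ring
          _ = u * e * v := by rw [hEu, hvE]
      have he'E'' : (E - g j) * (u * e * v) * (E - g j) = u * e * v := by
        simp only [sub_mul, mul_sub]
        rw [ul hE he'E, ur hE he'E, h1, h2]
        simp only [zero_mul, mul_zero]
        abel
      have hcard' : (s.erase j).card ≤ N := by
        rw [Finset.card_erase_of_mem hj]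
        omega
      obtain ⟨d', hd', hd'e'⟩ := ih (s.erase j) hcard' (E - g j) g hE''i hcluE''
        (u * e * v) he'i he'E'' he'0
      have hd'E : E * d' * E = d' := under_trans hE he'E hd'e'
      refine ⟨v * d' * u, rconj_local hE hd' hd'E ⟨v, u, hvS, huS, hvu, huv, rfl⟩, ?_⟩
      have k1 : v * (u * e * v) = e * v := by
        calc v * (u * e * v) = (v * u) * (e * v) := by noncomm_ring
          _ = e * v := by rw [hvu, ← mul_assoc, hEe]
      have k2 : (u * e * v) * u = u * e := by
        calc (u * e * v) * u = (u * e) * (v * u) := by noncomm_ring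
          _ = u * e := by rw [hvu, mul_assoc, heE']
      calc e * (v * d' * u) * e = (e * v) * d' * (u * e) := by noncomm_ring
        _ = (v * (u * e * v)) * d' * ((u * e * v) * u) := by rw [k1, k2]
        _ = v * ((u * e * v) * d' * (u * e * v)) * u := by noncomm_ring
        _ = v * d' * u := by rw [hd'e']


/-- Decomposition: every idempotent under `E` is a sum of an orthogonal family of
local idempotents. -/
theorem decomp {ι : Type*} [DecidableEq ι] : ∀ (N : ℕ) (s : Finset ι), s.card ≤ N →
    ∀ (E : R) (g : ι → R), IsIdempotentElem E → CLU E s g →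
    ∀ e : R, IsIdempotentElem e → E * e * E = e →
    ∃ (m : ℕ) (d : Fin m → R), CLU e (Finset.univ : Finset (Fin m)) d := by
  intro N
  induction N with
  | zero =>
    intro s hcard E g _ hclu e _ heE
    rw [Finset.card_eq_zero.mp (Nat.le_zero.mp hcard)] at hclu
    have he0 : e = 0 := by rw [← heE, hclu.empty_eq_zero, zero_mul, zero_mul]
    exact ⟨0, Fin.elim0, fun i _ => i.elim0, fun i _ => i.elim0, by
      rw [Finset.univ_eq_empty, Finset.sum_empty, he0]⟩
  | succ N ih =>
    intro s hcard E g hE hclu e hei heE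
    by_cases he0 : e = 0
    · exact ⟨0, Fin.elim0, fun i _ => i.elim0, fun i _ => i.elim0, by
        rw [Finset.univ_eq_empty, Finset.sum_empty, he0]⟩
    obtain ⟨d₀, hd₀, hd₀e⟩ := sub_loc (N + 1) s hcard E g hE hclu e hei heE he0
    have hd₀E : E * d₀ * E = d₀ := under_trans hE heE hd₀e
    obtain ⟨j, hj, hconj⟩ := m1 hE hclu hd₀ hd₀E
    obtain ⟨u, v, huS, hvS, huv, hvu, hgj⟩ := hconj
    have hEe : E * e = e := ul hE heE
    have heE' : e * E = e := ur hE heE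
    have huE : u * E = u := ur hE huS.symm
    have hEu : E * u = u := ul hE huS.symm
    have hvE : v * E = v := ur hE hvS.symm
    have hEv : E * v = v := ul hE hvS.symm
    have hd₀e' : d₀ * e = d₀ := by
      calc d₀ * e = (e * d₀ * e) * e := by rw [hd₀e]
        _ = e * d₀ * (e * e) := by noncomm_ring
        _ = e * d₀ * e := by rw [hei]
        _ = d₀ := hd₀e
    have hed₀ : e * d₀ = d₀ := by
      calc e * d₀ = e * (e * d₀ * e) := by rw [hd₀e]
        _ = (e * e) * d₀ * e := by noncomm_ring
        _ = e * d₀ * e := by rw [hei]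
        _ = d₀ := hd₀e
    have hd₀E' : d₀ * E = d₀ := ur hE hd₀E
    have hEd₀ : E * d₀ = d₀ := ul hE hd₀E
    have he'i : IsIdempotentElem (u * e * v) := by
      show _ * _ = _
      calc (u * e * v) * (u * e * v) = u * e * (v * u) * e * v := by noncomm_ring
        _ = u * ((e * E) * e) * v := by rw [hvu]; noncomm_ring
        _ = u * e * v := by rw [heE', hei]
    have hrec : v * (u * e * v) * u = e := by
      calc v * (u * e * v) * u = (v * u) * e * (v * u) := by noncomm_ring
        _ = E * e * E := by rw [hvu]
        _ = e := heE
    have hgje' : g j * (u * e * v) = g j := by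
      calc g j * (u * e * v) = (u * d₀ * v) * (u * e * v) := by rw [hgj]
        _ = u * d₀ * (v * u) * e * v := by noncomm_ring
        _ = u * ((d₀ * E) * e) * v := by rw [hvu]; noncomm_ring
        _ = u * d₀ * v := by rw [hd₀E', hd₀e']
        _ = g j := hgj.symm
    have he'gj : (u * e * v) * g j = g j := by
      calc (u * e * v) * g j = (u * e * v) * (u * d₀ * v) := by rw [hgj]
        _ = u * e * (v * u) * d₀ * v := by noncomm_ring
        _ = u * ((e * E) * d₀) * v := by rw [hvu]; noncomm_ring
        _ = u * d₀ * v := by rw [heE', hed₀]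
        _ = g j := hgj.symm
    have hgji : IsIdempotentElem (g j) := (hclu.1 j hj).1
    have hgjE := hclu.under hj
    have hE''i : IsIdempotentElem (E - g j) := by
      show _ * _ = _
      rw [sub_mul, mul_sub, mul_sub, hE, ul hE hgjE, ur hE hgjE, hgji]
      abel
    have hcluE'' : CLU (E - g j) (s.erase j) g := by
      refine ⟨fun i hi => hclu.1 i (Finset.mem_of_mem_erase hi),
        fun i hi k hk hik => hclu.2.1 i (Finset.mem_of_mem_erase hi)
          k (Finset.mem_of_mem_erase hk) hik, ?_⟩
      have key : ∑ x ∈ s.erase j, g x + g j = E := by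
        rw [Finset.sum_erase_add s g hj]
        exact hclu.2.2
      exact eq_sub_of_add_eq key
    have he''i : IsIdempotentElem (u * e * v - g j) := by
      show _ * _ = _
      rw [sub_mul, mul_sub, mul_sub, he'i, hgje', he'gj, hgji]
      abel
    have he'E : E * (u * e * v) * E = u * e * v := by
      calc E * (u * e * v) * E = (E * u) * e * (v * E) := by noncomm_ring
        _ = u * e * v := by rw [hEu, hvE]
    have he''E'' : (E - g j) * (u * e * v - g j) * (E - g j) = u * e * v - g j := by
      have l1 : (E - g j) * (u * e * v - g j) = u * e * v - g j := by
        simp only [sub_mul, mul_sub]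
        rw [ul hE he'E, ul hE hgjE, hgje', hgji]
        abel
      rw [l1]
      simp only [sub_mul, mul_sub]
      rw [ur hE he'E, ur hE hgjE, he'gj, hgji]
      abel
    have hcard' : (s.erase j).card ≤ N := by
      rw [Finset.card_erase_of_mem hj]
      omega
    obtain ⟨m, d', hclu'⟩ := ih (s.erase j) hcard' (E - g j) g hE''i hcluE''
      (u * e * v - g j) he''i he''E''
    -- transport back
    have hd'under : ∀ k : Fin m, (u * e * v - g j) * d' k * (u * e * v - g j) = d' k :=
      fun k => hclu'.under (Finset.mem_univ k)
    have he''E : E * (u * e * v - g j) * E = u * e * v - g j := by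
      simp only [mul_sub, sub_mul]
      rw [he'E, hgjE]
    have hd'E : ∀ k : Fin m, E * d' k * E = d' k := fun k =>
      under_trans hE he''E (hd'under k)
    have hd₀gj : v * g j * u = d₀ := by
      calc v * g j * u = v * (u * d₀ * v) * u := by rw [hgj]
        _ = (v * u) * d₀ * (v * u) := by noncomm_ring
        _ = E * d₀ * E := by rw [hvu]
        _ = d₀ := hd₀E
    have hgjd' : ∀ k : Fin m, g j * d' k = 0 := by
      intro k
      have h3 : g j * (u * e * v - g j) = 0 := by rw [mul_sub, hgje', hgji, sub_self]
      calc g j * d' k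
          = g j * ((u * e * v - g j) * d' k * (u * e * v - g j)) := by rw [hd'under k]
        _ = (g j * (u * e * v - g j)) * (d' k * (u * e * v - g j)) := by noncomm_ring
        _ = 0 := by rw [h3, zero_mul]
    have hd'gj : ∀ k : Fin m, d' k * g j = 0 := by
      intro k
      have h4 : (u * e * v - g j) * g j = 0 := by rw [sub_mul, he'gj, hgji, sub_self]
      calc d' k * g j
          = ((u * e * v - g j) * d' k * (u * e * v - g j)) * g j := by rw [hd'under k]
        _ = ((u * e * v - g j) * d' k) * ((u * e * v - g j) * g j) := by noncomm_ring
        _ = 0 := by rw [h4, mul_zero]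
    have hd₀loc_d' : ∀ k : Fin m, d₀ * (v * d' k * u) = 0 := by
      intro k
      calc d₀ * (v * d' k * u) = (v * g j * u) * (v * d' k * u) := by rw [hd₀gj]
        _ = v * g j * (u * v) * d' k * u := by noncomm_ring
        _ = v * ((g j * E) * d' k) * u := by rw [huv]; noncomm_ring
        _ = 0 := by rw [ur hE hgjE, hgjd' k, mul_zero, zero_mul]
    have hd'_d₀ : ∀ k : Fin m, (v * d' k * u) * d₀ = 0 := by
      intro k
      calc (v * d' k * u) * d₀ = (v * d' k * u) * (v * g j * u) := by rw [hd₀gj]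
        _ = v * d' k * (u * v) * g j * u := by noncomm_ring
        _ = v * ((d' k * E) * g j) * u := by rw [huv]; noncomm_ring
        _ = 0 := by rw [ur hE (hd'E k), hd'gj k, mul_zero, zero_mul]
    have hd'd' : ∀ k l : Fin m, k ≠ l → (v * d' k * u) * (v * d' l * u) = 0 := by
      intro k l hkl
      calc (v * d' k * u) * (v * d' l * u) = v * d' k * (u * v) * d' l * u := by noncomm_ring
        _ = v * ((d' k * E) * d' l) * u := by rw [huv]; noncomm_ring
        _ = 0 := by
            rw [ur hE (hd'E k), hclu'.2.1 k (Finset.mem_univ k) l (Finset.mem_univ l) hkl,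
              mul_zero, zero_mul]
    refine ⟨m + 1, Fin.cases d₀ (fun k => v * d' k * u), ?_, ?_, ?_⟩
    · intro i _
      induction i using Fin.cases with
      | zero => simpa using hd₀
      | succ k =>
        simp only [Fin.cases_succ]
        exact rconj_local hE (hclu'.1 k (Finset.mem_univ k)) (hd'E k)
          ⟨v, u, hvS, huS, hvu, huv, rfl⟩
    · intro i _ k _ hik
      induction i using Fin.cases with
      | zero =>
        induction k using Fin.cases with
        | zero => exact absurd rfl hik
        | succ l => simp only [Fin.cases_zero, Fin.cases_succ]; exact hd₀loc_d' l
      | succ l =>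
        induction k using Fin.cases with
        | zero => simp only [Fin.cases_zero, Fin.cases_succ]; exact hd'_d₀ l
        | succ l' =>
          simp only [Fin.cases_succ]
          exact hd'd' l l' (fun h => hik (by rw [h]))
    · rw [Fin.sum_univ_succ]
      simp only [Fin.cases_zero, Fin.cases_succ]
      have hsum' : ∑ k : Fin m, v * d' k * u = v * (∑ k : Fin m, d' k) * u := by
        rw [Finset.mul_sum, Finset.sum_mul]
      rw [hsum', hclu'.2.2]
      have : v * (u * e * v - g j) * u = e - d₀ := by
        simp only [mul_sub, sub_mul]
        rw [hrec, hd₀gj]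
      rw [this]
      abel


/-! ### primitivity -/

theorem loc_prim {E x : R} (hl : IsLocalIdem x) (hx : E * x * E = x) :
    CornerPrimIdem E x := by
  refine ⟨hl.1, hx.symm, hl.2.1, ?_⟩
  intro a b hai hbi _ _ hab hba ha0 hb0 hsum
  have hax : a * x = a := by rw [← hsum, mul_add, hai, hab, add_zero]
  have hxa : x * a = a := by rw [← hsum, add_mul, hai, hba, add_zero]
  have hshape : x * a * x = a := by rw [hxa, hax]
  rcases cu_dich hl hshape with h | h
  · have hax2 : a = x := cu_idem hl.1 hai hxa hax h
    apply hb0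
    rw [hax2] at hsum
    rw [← add_sub_cancel_left x b, hsum, sub_self]
  · have hxab : x - a = b := by rw [← hsum]; abel
    rw [hxab] at h
    have hbx : b * x = b := by rw [← hsum, mul_add, hbi, hba, zero_add]
    have hxb : x * b = b := by rw [← hsum, add_mul, hbi, hab, zero_add]
    have : b = x := cu_idem hl.1 hbi hxb hbx h
    apply ha0
    have : a = x - b := by rw [← hsum]; abel
    rw [this, ‹b = x›, sub_self]

theorem prim_loc {ι : Type*} [DecidableEq ι] {E : R} {s : Finset ι} {g : ι → R}
    (hE : IsIdempotentElem E) (hclu : CLU E s g) {x : R} (hp : CornerPrimIdem E x) :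
    IsLocalIdem x := by
  obtain ⟨hxi, hxE, hx0, hmin⟩ := hp
  obtain ⟨d, hdl, hdx⟩ := sub_loc s.card s le_rfl E g hE hclu x hxi hxE.symm hx0
  have hxd : x * d = d := ul hxi hdx
  have hdx' : d * x = d := ur hxi hdx
  by_cases hb : x - d = 0
  · have : x = d := by rw [← sub_eq_zero]; exact hb
    rw [this]; exact hdl
  · exfalso
    have hdi := hdl.1
    have hbi : IsIdempotentElem (x - d) := by
      show _ * _ = _
      rw [sub_mul, mul_sub, mul_sub, hxi, hxd, hdx', hdi]
      abel
    have hdE : E * d * E = d := under_trans hE hxE.symm hdx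
    have hbE : E * (x - d) * E = x - d := by
      simp only [mul_sub, sub_mul]
      rw [hxE.symm, hdE]
    refine hmin d (x - d) hdi hbi hdE.symm hbE.symm ?_ ?_ hdl.2.1 hb ?_
    · rw [mul_sub, hdx', hdi, sub_self]
    · rw [sub_mul, hxd, hdi, sub_self]
    · abel

theorem conj_prim {E x y : R} (hE : IsIdempotentElem E) (hp : CornerPrimIdem E x)
    (h : CornerConjIdem E x y) : CornerPrimIdem E y := by
  have hyi : IsIdempotentElem y := ((rconj_iso hE hp.1 hp.2.1.symm h).2.1)
  obtain ⟨u, v, huS, hvS, huv, hvu, hy⟩ := h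
  have hEe : E * x = x := ul hE hp.2.1.symm
  have hy0 : y ≠ 0 := rconj_ne hp.2.1.symm ⟨u, v, huS, hvS, huv, hvu, hy⟩ hp.2.2.1
  refine ⟨hyi, (rconj_under hE ⟨u, v, huS, hvS, huv, hvu, hy⟩).symm, hy0, ?_⟩
  intro a b hai hbi haE hbE hab hba ha0 hb0 hsum
  have haE' : a * E = a := ur hE haE.symm
  have hbE' : b * E = b := ur hE hbE.symm
  have hai' : IsIdempotentElem (v * a * u) := by
    show _ * _ = _
    calc (v * a * u) * (v * a * u) = v * a * (u * v) * a * u := by noncomm_ring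
      _ = v * ((a * E) * a) * u := by rw [huv]; noncomm_ring
      _ = v * a * u := by rw [haE', hai]
  have hbi' : IsIdempotentElem (v * b * u) := by
    show _ * _ = _
    calc (v * b * u) * (v * b * u) = v * b * (u * v) * b * u := by noncomm_ring
      _ = v * ((b * E) * b) * u := by rw [huv]; noncomm_ring
      _ = v * b * u := by rw [hbE', hbi]
  have hrec : ∀ z : R, u * (v * z * u) * v = E * z * E := by
    intro z
    calc u * (v * z * u) * v = (u * v) * z * (u * v) := by noncomm_ring
      _ = E * z * E := by rw [huv]
  have hauE : E * (v * a * u) * E = v * a * u := by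
    calc E * (v * a * u) * E = (E * v) * a * (u * E) := by noncomm_ring
      _ = v * a * u := by rw [ul hE hvS.symm, ur hE huS.symm]
  have hbuE : E * (v * b * u) * E = v * b * u := by
    calc E * (v * b * u) * E = (E * v) * b * (u * E) := by noncomm_ring
      _ = v * b * u := by rw [ul hE hvS.symm, ur hE huS.symm]
  have hab' : (v * a * u) * (v * b * u) = 0 := by
    calc (v * a * u) * (v * b * u) = v * a * (u * v) * b * u := by noncomm_ring
      _ = v * ((a * E) * b) * u := by rw [huv]; noncomm_ring
      _ = 0 := by rw [haE', hab, mul_zero, zero_mul]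
  have hba' : (v * b * u) * (v * a * u) = 0 := by
    calc (v * b * u) * (v * a * u) = v * b * (u * v) * a * u := by noncomm_ring
      _ = v * ((b * E) * a) * u := by rw [huv]; noncomm_ring
      _ = 0 := by rw [hbE', hba, mul_zero, zero_mul]
  have ha0' : v * a * u ≠ 0 := by
    intro h0
    apply ha0
    have : u * (v * a * u) * v = a := by rw [hrec, ← haE]
    rw [← this, h0, mul_zero, zero_mul]
  have hb0' : v * b * u ≠ 0 := by
    intro h0
    apply hb0
    have : u * (v * b * u) * v = b := by rw [hrec, ← hbE]
    rw [← this, h0, mul_zero, zero_mul]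
  have hkey := hp.2.2.2 (v * a * u) (v * b * u) hai' hbi' hauE.symm hbuE.symm
    hab' hba' ha0' hb0'
  apply hkey
  calc v * a * u + v * b * u = v * (a + b) * u := by noncomm_ring
    _ = v * y * u := by rw [hsum]
    _ = v * (u * x * v) * u := by rw [hy]
    _ = (v * u) * x * (v * u) := by noncomm_ring
    _ = E * x * E := by rw [hvu]
    _ = x := hp.2.1.symm

/-- isomorphic local idempotents under `E` are conjugate in the corner of `E`. -/
theorem iso_conj {ι : Type*} {E : R} {s : Finset ι} {g : ι → R} (hE : IsIdempotentElem E)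
    (hclu : CLU E s g) {x y : R} (hx : IsLocalIdem x) (hy : IsLocalIdem y)
    (hxE : E * x * E = x) (hyE : E * y * E = y) (hiso : Iso x y) :
    CornerConjIdem E x y := by
  obtain ⟨i, hi, hcx⟩ := m1 hE hclu hx hxE
  obtain ⟨j, hj, hcy⟩ := m1 hE hclu hy hyE
  by_cases hij : i = j
  · subst hij
    exact rconj_trans hE hcx (rconj_symm hyE hcy)
  · have hgi : Iso (g i) (g j) :=
      ((rconj_iso hE hx.1 hxE hcx).symm.trans hiso).trans (rconj_iso hE hy.1 hyE hcy)
    have hconjij : CornerConjIdem E (g i) (g j) :=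
      orth_iso_rconj hE (hclu.under hi) (hclu.under hj)
        (hclu.2.1 i hi j hj hij) (hclu.2.1 j hj i hi (Ne.symm hij)) hgi
    exact rconj_trans hE (rconj_trans hE hcx hconjij) (rconj_symm hyE hcy)


/-! ### the ideal generated by ξ and the quotient ring -/

section Quot

variable {ξ : R}

theorem mem_zero : MemIdealGen ξ (0 : R) :=
  ⟨0, Fin.elim0, Fin.elim0, by simp⟩

theorem mem_add {x y : R} (hx : MemIdealGen ξ x) (hy : MemIdealGen ξ y) :
    MemIdealGen ξ (x + y) := by
  obtain ⟨n, a, b, hx⟩ := hx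
  obtain ⟨m, a', b', hy⟩ := hy
  refine ⟨n + m, Fin.append a a', Fin.append b b', ?_⟩
  rw [Fin.sum_univ_add]
  simp only [Fin.append_left, Fin.append_right]
  rw [hx, hy]

theorem mem_neg {x : R} (hx : MemIdealGen ξ x) : MemIdealGen ξ (-x) := by
  obtain ⟨n, a, b, hx⟩ := hx
  refine ⟨n, fun i => -(a i), b, ?_⟩
  rw [hx]
  simp [neg_mul, Finset.sum_neg_distrib]

theorem mem_sub {x y : R} (hx : MemIdealGen ξ x) (hy : MemIdealGen ξ y) :
    MemIdealGen ξ (x - y) := by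
  have := mem_add hx (mem_neg hy)
  rwa [← sub_eq_add_neg] at this

theorem mem_mul_left (r : R) {x : R} (hx : MemIdealGen ξ x) : MemIdealGen ξ (r * x) := by
  obtain ⟨n, a, b, hx⟩ := hx
  refine ⟨n, fun i => r * a i, b, ?_⟩
  rw [hx, Finset.mul_sum]
  exact Finset.sum_congr rfl fun i _ => by noncomm_ring

theorem mem_mul_right (r : R) {x : R} (hx : MemIdealGen ξ x) : MemIdealGen ξ (x * r) := by
  obtain ⟨n, a, b, hx⟩ := hx
  refine ⟨n, a, fun i => b i * r, ?_⟩
  rw [hx, Finset.sum_mul]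
  exact Finset.sum_congr rfl fun i _ => by noncomm_ring

theorem mem_of_under (hξ : IsIdempotentElem ξ) {x : R} (h : ξ * x * ξ = x) :
    MemIdealGen ξ x := by
  refine ⟨1, fun _ => 1, fun _ => x * ξ, ?_⟩
  rw [Fin.sum_univ_one, one_mul, ← mul_assoc]
  exact h.symm

/-- The congruence of the two-sided ideal generated by `ξ`. -/
def modCon (ξ : R) : RingCon R where
  r x y := MemIdealGen ξ (x - y)
  iseqv := ⟨fun x => by simpa using mem_zero,
    fun {x y} h => by have := mem_neg h; rwa [neg_sub] at this,
    fun {x y z} h1 h2 => by have := mem_add h1 h2; rwa [sub_add_sub_cancel] at this⟩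
  mul' := fun {a b c d} h1 h2 => by
    have key : a * c - b * d = (a - b) * c + b * (c - d) := by noncomm_ring
    show MemIdealGen ξ (a * c - b * d)
    rw [key]
    exact mem_add (mem_mul_right _ h1) (mem_mul_left _ h2)
  add' := fun {a b c d} h1 h2 => by
    have key : (a + c) - (b + d) = (a - b) + (c - d) := by abel
    show MemIdealGen ξ (a + c - (b + d))
    rw [key]
    exact mem_add h1 h2

theorem pi_eq_iff {x y : R} :
    (modCon ξ).mk' x = (modCon ξ).mk' y ↔ MemIdealGen ξ (x - y) :=
  RingCon.eq _

theorem pi_zero_iff {x : R} : (modCon ξ).mk' x = 0 ↔ MemIdealGen ξ x := by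
  rw [show (0 : (modCon ξ).Quotient) = (modCon ξ).mk' 0 from (map_zero _).symm,
    pi_eq_iff, sub_zero]

theorem pi_surj : Function.Surjective ((modCon ξ).mk') :=
  fun q => Quotient.exists_rep q

theorem modIdem_iff {x : R} : ModIdem ξ x ↔ IsIdempotentElem ((modCon ξ).mk' x) := by
  constructor
  · intro h
    show _ * _ = _
    rw [← map_mul]
    exact pi_eq_iff.mpr h
  · intro h
    have : (modCon ξ).mk' (x * x) = (modCon ξ).mk' x := by rw [map_mul]; exact h
    exact pi_eq_iff.mp this

theorem modPrim_iff {x : R} :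
    ModPrimIdem ξ x ↔ IsPrimitiveIdem ((modCon ξ).mk' x) := by
  constructor
  · rintro ⟨h1, h2, h3⟩
    refine ⟨modIdem_iff.mp h1, fun h0 => h2 (pi_zero_iff.mp h0), ?_⟩
    intro a' b' ha' hb' hab hba ha0 hb0
    obtain ⟨a, rfl⟩ := pi_surj a'
    obtain ⟨b, rfl⟩ := pi_surj b'
    intro hsum
    have hmem : MemIdealGen ξ (a + b - x) := by
      refine pi_eq_iff.mp ?_
      rw [map_add]
      exact hsum
    exact h3 a b (modIdem_iff.mpr ha') (modIdem_iff.mpr hb')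
      (pi_zero_iff.mp (by rw [map_mul, hab]))
      (pi_zero_iff.mp (by rw [map_mul, hba]))
      (fun h => ha0 (pi_zero_iff.mpr h)) (fun h => hb0 (pi_zero_iff.mpr h)) hmem
  · rintro ⟨h1, h2, h3⟩
    refine ⟨modIdem_iff.mpr h1, fun h0 => h2 (pi_zero_iff.mpr h0), ?_⟩
    intro a b ha hb hab hba ha0 hb0 hmem
    refine h3 ((modCon ξ).mk' a) ((modCon ξ).mk' b) (modIdem_iff.mp ha) (modIdem_iff.mp hb)
      (by rw [← map_mul]; exact pi_zero_iff.mpr hab)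
      (by rw [← map_mul]; exact pi_zero_iff.mpr hba)
      (fun h => ha0 (pi_zero_iff.mp h)) (fun h => hb0 (pi_zero_iff.mp h)) ?_
    rw [← map_add]
    exact pi_eq_iff.mpr hmem

theorem modConj_iff {x y : R} :
    ModConjIdem ξ x y ↔ CornerConjIdem 1 ((modCon ξ).mk' x) ((modCon ξ).mk' y) := by
  constructor
  · rintro ⟨u, v, h1, h2, h3⟩
    refine ⟨(modCon ξ).mk' u, (modCon ξ).mk' v, by simp, by simp, ?_, ?_, ?_⟩
    · have key := pi_eq_iff.mpr h1
      rw [map_mul, map_one] at key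
      exact key
    · have key := pi_eq_iff.mpr h2
      rw [map_mul, map_one] at key
      exact key
    · have key := pi_eq_iff.mpr h3
      rw [map_mul, map_mul] at key
      exact key.symm
  · rintro ⟨u', v', _, _, huv, hvu, hy⟩
    obtain ⟨u, rfl⟩ := pi_surj u'
    obtain ⟨v, rfl⟩ := pi_surj v'
    refine ⟨u, v, ?_, ?_, ?_⟩
    · refine pi_eq_iff.mp ?_
      rw [map_mul, map_one]
      exact huv
    · refine pi_eq_iff.mp ?_
      rw [map_mul, map_one]
      exact hvu
    · refine pi_eq_iff.mp ?_
      rw [map_mul, map_mul]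
      exact hy.symm

end Quot


/-! ### bridging lemmas -/

theorem prim_one_iff {x : R} : IsPrimitiveIdem x ↔ CornerPrimIdem 1 x := by
  constructor
  · rintro ⟨h1, h2, h3⟩
    exact ⟨h1, by simp, h2,
      fun a b hai hbi _ _ hab hba ha hb => h3 a b hai hbi hab hba ha hb⟩
  · rintro ⟨h1, _, h2, h3⟩
    exact ⟨h1, h2,
      fun a b hai hbi hab hba ha hb => h3 a b hai hbi (by simp) (by simp) hab hba ha hb⟩

theorem local_map {S : Type*} [Ring S] (φ : R →+* S) (hs : Function.Surjective φ)
    {g : R} (hl : IsLocalIdem g) (h0 : φ g ≠ 0) : IsLocalIdem (φ g) := by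
  refine ⟨?_, h0, ?_⟩
  · show φ g * φ g = φ g
    rw [← map_mul, hl.1]
  · intro z'
    obtain ⟨z, rfl⟩ := hs z'
    rcases hl.2.2 z with ⟨y, hy, hy1, hy2⟩ | ⟨y, hy, hy1, hy2⟩
    · left
      refine ⟨φ y, ?_, ?_, ?_⟩
      · simp only [← map_mul]; exact congrArg φ hy
      · simp only [← map_mul]; exact congrArg φ hy1
      · simp only [← map_mul]; exact congrArg φ hy2
    · right
      refine ⟨φ y, ?_, ?_, ?_⟩
      · simp only [← map_mul]; exact congrArg φ hy
      · simp only [← map_mul, ← map_sub]; exact congrArg φ hy1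
      · simp only [← map_mul, ← map_sub]; exact congrArg φ hy2

theorem corner_conj_to_conj {ξ f₁ f₂ : R} (hξ : IsIdempotentElem ξ) (hf₁ : ξ * f₁ * ξ = f₁)
    (h : CornerConjIdem ξ f₁ f₂) : IsConjIdem f₁ f₂ := by
  obtain ⟨u, v, huS, hvS, huv, hvu, hy⟩ := h
  have huξ : u * ξ = u := ur hξ huS.symm
  have hξu : ξ * u = u := ul hξ huS.symm
  have hvξ : v * ξ = v := ur hξ hvS.symm
  have hξv : ξ * v = v := ul hξ hvS.symm
  have hUV : (u + (1 - ξ)) * (v + (1 - ξ)) = 1 := by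
    simp only [mul_add, add_mul, mul_sub, sub_mul, mul_one, one_mul]
    rw [huv, huξ, hξv, hξ]
    abel
  have hVU : (v + (1 - ξ)) * (u + (1 - ξ)) = 1 := by
    simp only [mul_add, add_mul, mul_sub, sub_mul, mul_one, one_mul]
    rw [hvu, hvξ, hξu, hξ]
    abel
  have hf₁ξ : f₁ * ξ = f₁ := ur hξ hf₁
  have hξf₁ : ξ * f₁ = f₁ := ul hξ hf₁
  refine ⟨⟨u + (1 - ξ), v + (1 - ξ), hUV, hVU⟩, ?_⟩
  show f₂ = (u + (1 - ξ)) * f₁ * (v + (1 - ξ))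
  have l1 : (u + (1 - ξ)) * f₁ = u * f₁ := by
    simp only [add_mul, sub_mul, one_mul]
    rw [hξf₁]
    abel
  have l2 : u * f₁ * (v + (1 - ξ)) = u * f₁ * v := by
    simp only [mul_add, mul_sub, mul_one]
    rw [mul_assoc u f₁ ξ, hf₁ξ]
    abel
  rw [l1, l2]
  exact hy

theorem corner_prim_to_prim {ξ f : R} (hξ : IsIdempotentElem ξ) (hp : CornerPrimIdem ξ f) :
    IsPrimitiveIdem f := by
  obtain ⟨hfi, hfξ, hf0, hmin⟩ := hp
  refine ⟨hfi, hf0, ?_⟩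
  intro a b hai hbi hab hba ha0 hb0 hsum
  have haf : a * f = a := by rw [← hsum, mul_add, hai, hab, add_zero]
  have hfa : f * a = a := by rw [← hsum, add_mul, hai, hba, add_zero]
  have hbf : b * f = b := by rw [← hsum, mul_add, hbi, hba, zero_add]
  have hfb : f * b = b := by rw [← hsum, add_mul, hbi, hab, zero_add]
  have hξf : ξ * f = f := ul hξ hfξ.symm
  have hfξ' : f * ξ = f := ur hξ hfξ.symm
  have haξ : a = ξ * a * ξ := by
    have k : ξ * a * ξ = a := by
      calc ξ * a * ξ = ξ * (f * a * f) * ξ := by rw [hfa, haf]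
        _ = (ξ * f) * a * (f * ξ) := by noncomm_ring
        _ = f * a * f := by rw [hξf, hfξ']
        _ = a := by rw [hfa, haf]
    exact k.symm
  have hbξ : b = ξ * b * ξ := by
    have k : ξ * b * ξ = b := by
      calc ξ * b * ξ = ξ * (f * b * f) * ξ := by rw [hfb, hbf]
        _ = (ξ * f) * b * (f * ξ) := by noncomm_ring
        _ = f * b * f := by rw [hξf, hfξ']
        _ = b := by rw [hfb, hbf]
    exact k.symm
  exact hmin a b hai hbi haξ hbξ hab hba ha0 hb0 hsum

theorem mem_conj {ξ x y : R} (h : IsConjIdem x y) (hm : MemIdealGen ξ x) :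
    MemIdealGen ξ y := by
  obtain ⟨u, hy⟩ := h
  rw [hy]
  exact mem_mul_right _ (mem_mul_left _ hm)

theorem isConj_symm {x y : R} (h : IsConjIdem x y) : IsConjIdem y x := by
  obtain ⟨u, hy⟩ := h
  exact ⟨u⁻¹, by rw [hy]; simp [mul_assoc]⟩

theorem isConj_trans {x y z : R} (h1 : IsConjIdem x y) (h2 : IsConjIdem y z) :
    IsConjIdem x z := by
  obtain ⟨u₁, hy⟩ := h1
  obtain ⟨u₂, hz⟩ := h2
  exact ⟨u₂ * u₁, by rw [hz, hy]; simp [mul_assoc]⟩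

end SPCaux


open SPCaux in
/-- **Classification of primitive idempotents via a corner.**  Let `A` be a semiperfect
ring and `ξ ∈ A` an idempotent.  There is a bijection between the set of conjugacy
classes of primitive idempotents of `A` and the disjoint union of the set of conjugacy
classes of primitive idempotents of the corner ring `ξAξ` and the set of conjugacy
classes of primitive idempotents of the quotient ring `A/(AξA)`.  It sends the class of
a primitive idempotent `e` lying in `AξA` to the class (in `ξAξ`) of a conjugate of `e`
lying in `ξAξ`, and the class of a primitive idempotent `e ∉ AξA` to the class of its
image in `A/(AξA)`. -/
theorem semiperfect_corner_classification {A : Type*} [Ring A]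
    (hA : SemiperfectRing' A) (ξ : A) (hξ : IsIdempotentElem ξ) :
    ∃ φ : Quot (fun x y : {e : A // IsPrimitiveIdem e} => IsConjIdem (x : A) (y : A)) ≃
        (Quot (fun x y : {e : A // CornerPrimIdem ξ e} => CornerConjIdem ξ (x : A) (y : A)) ⊕
         Quot (fun x y : {e : A // ModPrimIdem ξ e} => ModConjIdem ξ (x : A) (y : A))),
      (∀ e : {e : A // IsPrimitiveIdem e}, MemIdealGen ξ (e : A) →
        ∃ e' : {x : A // CornerPrimIdem ξ x}, IsConjIdem (e : A) (e' : A) ∧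
          φ (Quot.mk _ e) = Sum.inl (Quot.mk _ e')) ∧
      (∀ e : {e : A // IsPrimitiveIdem e}, ¬ MemIdealGen ξ (e : A) →
        ∃ e' : {x : A // ModPrimIdem ξ x}, (e' : A) = (e : A) ∧
          φ (Quot.mk _ e) = Sum.inr (Quot.mk _ e')) := by

  classical
  obtain ⟨n, g, hgloc, hgorth, hgsum⟩ := hA
  have hone : IsIdempotentElem (1 : A) := mul_one 1
  have hclu1 : CLU (1 : A) Finset.univ g :=
    ⟨fun i _ => hgloc i, fun i _ j _ hij => hgorth i j hij, hgsum⟩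
  have primloc : ∀ {x : A}, IsPrimitiveIdem x → IsLocalIdem x := fun hx =>
    prim_loc hone hclu1 (prim_one_iff.mp hx)
  obtain ⟨m, dξ, hcluξ⟩ := decomp Finset.univ.card Finset.univ le_rfl 1 g hone hclu1 ξ hξ
    (by simp)
  set π := (modCon ξ).mk' with hπdef
  have honeQ : IsIdempotentElem (1 : (modCon ξ).Quotient) := mul_one 1
  have hcluQ : CLU (1 : (modCon ξ).Quotient)
      (Finset.univ.filter (fun i => π (g i) ≠ 0)) (fun i => π (g i)) := by
    refine ⟨?_, ?_, ?_⟩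
    · intro i hi
      exact local_map π pi_surj (hgloc i) ((Finset.mem_filter.mp hi).2)
    · intro i _ j _ hij
      rw [← map_mul, hgorth i j hij, map_zero]
    · rw [Finset.sum_filter_of_ne (fun x _ h => h), ← map_sum, hgsum, map_one]
  -- existence of corner representatives
  have hEX1 : ∀ e : A, IsPrimitiveIdem e → MemIdealGen ξ e →
      ∃ f, CornerPrimIdem ξ f ∧ IsConjIdem e f := by
    intro e he hM
    have hel : IsLocalIdem e := primloc he
    obtain ⟨N, a, b, hsum⟩ := hM
    have hterm : ∀ i ∈ Finset.univ, e * (e * (a i * ξ * b i) * e) * e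
        = e * (a i * ξ * b i) * e := by
      intro i _
      have l1 : e * (e * (a i * ξ * b i) * e) = e * (a i * ξ * b i) * e := by
        rw [← mul_assoc, ← mul_assoc, he.1]
      rw [l1, mul_assoc, he.1]
    have hsum2 : ∑ i : Fin N, e * (a i * ξ * b i) * e = e := by
      have key : ∑ i : Fin N, e * (a i * ξ * b i) * e
          = e * (∑ i : Fin N, a i * ξ * b i) * e := by
        rw [Finset.mul_sum, Finset.sum_mul]
      rw [key, ← hsum, he.1, he.1]
    obtain ⟨i, _, hcu⟩ := cu_sum hel Finset.univ _ hterm hsum2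
    obtain ⟨c, hcs, h1, h2⟩ := hcu
    have hec : e * c = c := ul he.1 hcs.symm
    have hce : c * e = c := ur he.1 hcs.symm
    have hxy : (e * a i * ξ) * (ξ * b i * c) = e := by
      calc (e * a i * ξ) * (ξ * b i * c) = e * (a i * (ξ * ξ) * b i) * c := by noncomm_ring
        _ = e * (a i * ξ * b i) * c := by rw [hξ]
        _ = e * (a i * ξ * b i) * (e * c) := by rw [hec]
        _ = (e * (a i * ξ * b i) * e) * c := by noncomm_ring
        _ = e := h1
    have hex : e * (e * a i * ξ) = e * a i * ξ := by
      rw [← mul_assoc, ← mul_assoc, he.1]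
    have hye : (ξ * b i * c) * e = ξ * b i * c := by
      rw [mul_assoc, hce]
    have hfidem : IsIdempotentElem ((ξ * b i * c) * (e * a i * ξ)) := by
      show _ * _ = _
      calc ((ξ * b i * c) * (e * a i * ξ)) * ((ξ * b i * c) * (e * a i * ξ))
          = (ξ * b i * c) * ((e * a i * ξ) * (ξ * b i * c)) * (e * a i * ξ) := by
            noncomm_ring
        _ = ((ξ * b i * c) * e) * (e * a i * ξ) := by rw [hxy]
        _ = (ξ * b i * c) * (e * a i * ξ) := by rw [hye]
    have hiso : Iso e ((ξ * b i * c) * (e * a i * ξ)) := by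
      refine ⟨he.1, hfidem, e * a i * ξ, ξ * b i * c, ?_, ?_, hxy, rfl⟩
      · have key : e * (e * a i * ξ) * ((ξ * b i * c) * (e * a i * ξ))
            = e * a i * ξ := by
          calc e * (e * a i * ξ) * ((ξ * b i * c) * (e * a i * ξ))
              = ((e * (e * a i * ξ)) * (ξ * b i * c)) * (e * a i * ξ) := by noncomm_ring
            _ = ((e * a i * ξ) * (ξ * b i * c)) * (e * a i * ξ) := by rw [hex]
            _ = e * (e * a i * ξ) := by rw [hxy, ← mul_assoc]
            _ = e * a i * ξ := hex
        exact key.symm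
      · have key : ((ξ * b i * c) * (e * a i * ξ)) * (ξ * b i * c) * e
            = ξ * b i * c := by
          calc ((ξ * b i * c) * (e * a i * ξ)) * (ξ * b i * c) * e
              = (ξ * b i * c) * ((e * a i * ξ) * (ξ * b i * c)) * e := by noncomm_ring
            _ = (ξ * b i * c) * e * e := by rw [hxy]
            _ = (ξ * b i * c) * e := by rw [mul_assoc, he.1]
            _ = ξ * b i * c := hye
        exact key.symm
    have hfloc : IsLocalIdem ((ξ * b i * c) * (e * a i * ξ)) := iso_local hiso hel
    have hfξ : ξ * ((ξ * b i * c) * (e * a i * ξ)) * ξ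
        = (ξ * b i * c) * (e * a i * ξ) := by
      calc ξ * ((ξ * b i * c) * (e * a i * ξ)) * ξ
          = (ξ * ξ) * (b i * c * (e * a i)) * (ξ * ξ) := by noncomm_ring
        _ = ξ * (b i * c * (e * a i)) * ξ := by rw [hξ]
        _ = (ξ * b i * c) * (e * a i * ξ) := by noncomm_ring
    exact ⟨(ξ * b i * c) * (e * a i * ξ), loc_prim hfloc hfξ,
      isConj_iff_cc.mpr (iso_conj hone hclu1 hel hfloc (by simp) (by simp) hiso)⟩
  have hEX2 : ∀ x : A, ModPrimIdem ξ x →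
      ∃ e', IsPrimitiveIdem e' ∧ ¬ MemIdealGen ξ e' ∧ ModConjIdem ξ x e' := by
    intro x hx
    have hq : IsPrimitiveIdem (π x) := modPrim_iff.mp hx
    have hql : IsLocalIdem (π x) := prim_loc honeQ hcluQ (prim_one_iff.mp hq)
    obtain ⟨i, hi, hconj⟩ := m1 honeQ hcluQ hql (by simp)
    refine ⟨g i, prim_one_iff.mpr (loc_prim (hgloc i) (by simp)),
      fun h => (Finset.mem_filter.mp hi).2 (pi_zero_iff.mpr h), modConj_iff.mpr hconj⟩
  -- lifting conjugacy along the quotient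
  have hINJ2 : ∀ e₁ e₂ : A, IsLocalIdem e₁ → IsLocalIdem e₂ → ¬ MemIdealGen ξ e₂ →
      ModConjIdem ξ e₁ e₂ → IsConjIdem e₁ e₂ := by
    intro e₁ e₂ h₁ h₂ hm hc
    obtain ⟨u, v, hm1, hm2, hm3⟩ := hc
    have hπ3 : π u * π e₁ * π v = π e₂ := by
      have key := pi_eq_iff.mpr hm3
      rwa [map_mul, map_mul] at key
    have hπe₁ : IsIdempotentElem (π e₁) := by
      show _ * _ = _
      rw [← map_mul, h₁.1]
    have hπe₂ : IsIdempotentElem (π e₂) := by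
      show _ * _ = _
      rw [← map_mul, h₂.1]
    set p := e₂ * u * e₁ with hp
    set q := e₁ * v * e₂ with hq
    have he₂p : e₂ * p = p := by rw [hp, ← mul_assoc, ← mul_assoc, h₂.1]
    have hpe₁ : p * e₁ = p := by rw [hp, mul_assoc, h₁.1]
    have he₁q : e₁ * q = q := by rw [hq, ← mul_assoc, ← mul_assoc, h₁.1]
    have hqe₂ : q * e₂ = q := by rw [hq, mul_assoc, h₂.1]
    have hMpq : MemIdealGen ξ (p * q - e₂) := by
      refine pi_eq_iff.mp ?_
      rw [hp, hq]
      simp only [map_mul]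
      calc π e₂ * π u * π e₁ * (π e₁ * π v * π e₂)
          = π e₂ * (π u * (π e₁ * π e₁) * π v) * π e₂ := by noncomm_ring
        _ = π e₂ * (π u * π e₁ * π v) * π e₂ := by rw [hπe₁]
        _ = π e₂ * π e₂ * π e₂ := by rw [hπ3]
        _ = π e₂ := by rw [hπe₂, hπe₂]
    have hpq_shape : e₂ * (p * q) * e₂ = p * q := by
      calc e₂ * (p * q) * e₂ = (e₂ * p) * (q * e₂) := by noncomm_ring
        _ = p * q := by rw [he₂p, hqe₂]
    rcases cu_dich h₂ hpq_shape with hcu | hcu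
    · obtain ⟨c, hcS, hc1, hc2⟩ := hcu
      have he₂c : e₂ * c = c := ul h₂.1 hcS.symm
      have hce₂ : c * e₂ = c := ur h₂.1 hcS.symm
      have hd_idem : IsIdempotentElem (q * c * p) := by
        show _ * _ = _
        calc (q * c * p) * (q * c * p) = q * (c * (p * q)) * (c * p) := by noncomm_ring
          _ = q * e₂ * (c * p) := by rw [hc2]
          _ = q * (c * p) := by rw [hqe₂]
          _ = q * c * p := by rw [← mul_assoc]
      have hp1 : p * (q * c * p) = p := by
        calc p * (q * c * p) = ((p * q) * c) * p := by noncomm_ring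
          _ = e₂ * p := by rw [hc1]
          _ = p := he₂p
      have hq1 : (q * c * p) * (q * c) = q * c := by
        calc (q * c * p) * (q * c) = q * (c * (p * q)) * c := by noncomm_ring
          _ = q * e₂ * c := by rw [hc2]
          _ = q * c := by rw [hqe₂]
      have hq2 : (q * c) * e₂ = q * c := by rw [mul_assoc, hce₂]
      have hIso : Iso e₂ (q * c * p) := by
        refine ⟨h₂.1, hd_idem, p, q * c, ?_, ?_, ?_, rfl⟩
        · rw [he₂p, hp1]
        · rw [hq1, hq2]
        · rw [← mul_assoc]
          exact hc1
      have hd0 : q * c * p ≠ 0 := iso_ne_zero hIso h₂.2.1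
      have hdE₁shape : e₁ * (q * c * p) * e₁ = q * c * p := by
        calc e₁ * (q * c * p) * e₁ = (e₁ * q) * c * (p * e₁) := by noncomm_ring
          _ = q * c * p := by rw [he₁q, hpe₁]
      have hd_e₁ : q * c * p = e₁ := by
        rcases cu_dich h₁ hdE₁shape with hcu' | hcu'
        · exact cu_idem h₁.1 hd_idem (ul h₁.1 hdE₁shape) (ur h₁.1 hdE₁shape) hcu'
        · exfalso
          have hl1 : e₁ * (q * c * p) = q * c * p := ul h₁.1 hdE₁shape
          have hl2 : (q * c * p) * e₁ = q * c * p := ur h₁.1 hdE₁shape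
          have hbidem : IsIdempotentElem (e₁ - q * c * p) := by
            show _ * _ = _
            rw [sub_mul, mul_sub, mul_sub, h₁.1, hl1, hl2, hd_idem]
            abel
          have key := cu_idem h₁.1 hbidem (by rw [mul_sub, h₁.1, hl1])
            (by rw [sub_mul, h₁.1, hl2]) hcu'
          exact hd0 (sub_eq_self.mp key)
      have hIso' : Iso e₁ e₂ := by
        rw [hd_e₁] at hIso
        exact hIso.symm
      exact isConj_iff_cc.mpr (iso_conj hone hclu1 h₁ h₂ (by simp) (by simp) hIso')
    · exfalso
      obtain ⟨c, hcS, hc1, _⟩ := hcu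
      have hmm : MemIdealGen ξ (e₂ - p * q) := by
        have key := mem_neg hMpq
        rwa [neg_sub] at key
      exact hm (by rw [← hc1]; exact mem_mul_right c hmm)
  -- remaining transfer helpers
  have fwdMod : ∀ e : A, IsPrimitiveIdem e → ¬ MemIdealGen ξ e → ModPrimIdem ξ e := by
    intro e he hm
    exact modPrim_iff.mpr (prim_one_iff.mpr (loc_prim
      (local_map π pi_surj (primloc he) (fun h0 => hm (pi_zero_iff.mp h0))) (by simp)))
  have cornerConj : ∀ f₁ f₂ : A, CornerPrimIdem ξ f₁ → CornerPrimIdem ξ f₂ →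
      IsConjIdem f₁ f₂ → CornerConjIdem ξ f₁ f₂ := by
    intro f₁ f₂ h1 h2 hc
    have l1 : IsLocalIdem f₁ := prim_loc hξ hcluξ h1
    have l2 : IsLocalIdem f₂ := prim_loc hξ hcluξ h2
    have hiso : Iso f₁ f₂ := rconj_iso hone l1.1 (by simp) (isConj_iff_cc.mp hc)
    exact iso_conj hξ hcluξ l1 l2 h1.2.1.symm h2.2.1.symm hiso
  have modconj_symm : ∀ x y : A, ModConjIdem ξ x y → ModConjIdem ξ y x := fun x y h =>
    modConj_iff.mpr (rconj_symm (by simp) (modConj_iff.mp h))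
  have modconj_trans : ∀ x y z : A, ModConjIdem ξ x y → ModConjIdem ξ y z →
      ModConjIdem ξ x z := fun x y z h1 h2 =>
    modConj_iff.mpr (rconj_trans honeQ (modConj_iff.mp h1) (modConj_iff.mp h2))
  have conj_to_modconj : ∀ x y : A, IsConjIdem x y → ModConjIdem ξ x y := by
    rintro x y ⟨u, hy⟩
    exact ⟨u, ↑u⁻¹, by rw [Units.mul_inv, sub_self]; exact mem_zero,
      by rw [Units.inv_mul, sub_self]; exact mem_zero,
      by rw [← hy, sub_self]; exact mem_zero⟩
  -- the forward map
  let F0 : {e : A // IsPrimitiveIdem e} →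
      (Quot (fun x y : {e : A // CornerPrimIdem ξ e} => CornerConjIdem ξ (x : A) (y : A)) ⊕
       Quot (fun x y : {e : A // ModPrimIdem ξ e} => ModConjIdem ξ (x : A) (y : A))) :=
    fun e =>
      if h : MemIdealGen ξ (e : A) then
        Sum.inl (Quot.mk _ ⟨(hEX1 _ e.2 h).choose, (hEX1 _ e.2 h).choose_spec.1⟩)
      else Sum.inr (Quot.mk _ ⟨(e : A), fwdMod _ e.2 h⟩)
  have hF0 : ∀ e₁ e₂ : {e : A // IsPrimitiveIdem e},
      IsConjIdem (e₁ : A) (e₂ : A) → F0 e₁ = F0 e₂ := by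
    intro e₁ e₂ hc
    by_cases h : MemIdealGen ξ (e₁ : A)
    · have h' : MemIdealGen ξ (e₂ : A) := mem_conj hc h
      unfold F0
      beta_reduce
      rw [dif_pos h, dif_pos h']
      have s1 := (hEX1 _ e₁.2 h).choose_spec
      have s2 := (hEX1 _ e₂.2 h').choose_spec
      exact congrArg Sum.inl (Quot.sound
        (cornerConj _ _ s1.1 s2.1 (isConj_trans (isConj_symm s1.2) (isConj_trans hc s2.2))))
    · have h' : ¬ MemIdealGen ξ (e₂ : A) := fun hh => h (mem_conj (isConj_symm hc) hh)
      unfold F0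
      beta_reduce
      rw [dif_neg h, dif_neg h']
      exact congrArg Sum.inr (Quot.sound (conj_to_modconj _ _ hc))
  let Gl : {x : A // CornerPrimIdem ξ x} →
      Quot (fun x y : {e : A // IsPrimitiveIdem e} => IsConjIdem (x : A) (y : A)) :=
    fun f => Quot.mk _ ⟨(f : A), corner_prim_to_prim hξ f.2⟩
  have hGl : ∀ f₁ f₂ : {x : A // CornerPrimIdem ξ x},
      CornerConjIdem ξ (f₁ : A) (f₂ : A) → Gl f₁ = Gl f₂ := fun f₁ f₂ h =>
    Quot.sound (corner_conj_to_conj hξ f₁.2.2.1.symm h)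
  let Gr : {x : A // ModPrimIdem ξ x} →
      Quot (fun x y : {e : A // IsPrimitiveIdem e} => IsConjIdem (x : A) (y : A)) :=
    fun x => Quot.mk _ ⟨(hEX2 _ x.2).choose, (hEX2 _ x.2).choose_spec.1⟩
  have hGr : ∀ x₁ x₂ : {x : A // ModPrimIdem ξ x},
      ModConjIdem ξ (x₁ : A) (x₂ : A) → Gr x₁ = Gr x₂ := by
    intro x₁ x₂ h
    apply Quot.sound
    have s1 := (hEX2 _ x₁.2).choose_spec
    have s2 := (hEX2 _ x₂.2).choose_spec
    have hmc : ModConjIdem ξ (hEX2 _ x₁.2).choose (hEX2 _ x₂.2).choose :=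
      modconj_trans _ _ _ (modconj_trans _ _ _ (modconj_symm _ _ s1.2.2) h) s2.2.2
    exact hINJ2 _ _ (primloc s1.1) (primloc s2.1) s2.2.1 hmc
  refine ⟨⟨Quot.lift F0 hF0, Sum.elim (Quot.lift Gl hGl) (Quot.lift Gr hGr), ?_, ?_⟩, ?_, ?_⟩
  · -- left inverse
    refine Quot.ind ?_
    intro e
    by_cases h : MemIdealGen ξ (e : A)
    · have s1 := (hEX1 _ e.2 h).choose_spec
      have step : Quot.lift F0 hF0 (Quot.mk _ e) =
          Sum.inl (Quot.mk _ (⟨(hEX1 _ e.2 h).choose, s1.1⟩ : {x : A // CornerPrimIdem ξ x})) := by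
        show F0 e = _
        unfold F0
        beta_reduce
        rw [dif_pos h]
      rw [step]
      show Gl _ = _
      exact Quot.sound (isConj_symm s1.2)
    · have step : Quot.lift F0 hF0 (Quot.mk _ e) =
          Sum.inr (Quot.mk _ (⟨(e : A), fwdMod _ e.2 h⟩ : {x : A // ModPrimIdem ξ x})) := by
        show F0 e = _
        unfold F0
        beta_reduce
        rw [dif_neg h]
      rw [step]
      show Gr _ = _
      have s1 := (hEX2 _ (fwdMod _ e.2 h)).choose_spec
      exact Quot.sound (hINJ2 _ _ (primloc s1.1) (primloc e.2) h
        (modconj_symm _ _ s1.2.2))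
  · -- right inverse
    rintro (q | q)
    · induction q using Quot.ind with
      | _ f =>
      show Quot.lift F0 hF0 (Gl f) = _
      show F0 ⟨(f : A), corner_prim_to_prim hξ f.2⟩ = _
      have hMf : MemIdealGen ξ (f : A) := mem_of_under hξ f.2.2.1.symm
      unfold F0
      beta_reduce
      rw [dif_pos hMf]
      have s1 := (hEX1 _ (corner_prim_to_prim hξ f.2) hMf).choose_spec
      exact congrArg Sum.inl (Quot.sound (cornerConj _ _ s1.1 f.2 (isConj_symm s1.2)))
    · induction q using Quot.ind with
      | _ x =>
      show Quot.lift F0 hF0 (Gr x) = _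
      have s1 := (hEX2 _ x.2).choose_spec
      show F0 ⟨(hEX2 _ x.2).choose, s1.1⟩ = _
      unfold F0
      beta_reduce
      rw [dif_neg s1.2.1]
      exact congrArg Sum.inr (Quot.sound (modconj_symm _ _ s1.2.2))
  · -- property 1
    intro e h
    have s1 := (hEX1 _ e.2 h).choose_spec
    refine ⟨⟨(hEX1 _ e.2 h).choose, s1.1⟩, s1.2, ?_⟩
    show Quot.lift F0 hF0 (Quot.mk _ e) = _
    show F0 e = _
    unfold F0
    beta_reduce
    rw [dif_pos h]
  · -- property 2
    intro e h
    refine ⟨⟨(e : A), fwdMod _ e.2 h⟩, rfl, ?_⟩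
    show Quot.lift F0 hF0 (Quot.mk _ e) = _
    show F0 e = _
    unfold F0
    beta_reduce
    rw [dif_neg h]
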